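/- arXiv:2602.04414 — 5 statements merged into one kernel-verified Lean document; each statement's English description precedes it below -/
import Mathlib

section
/- Fix h ∈ (0, 1/10) and let t ∈ ℂ satisfy |Im t| ≤ 2h, −h ≤ Re t ≤ 2 − h, |t| ≥ h, and |t − 1| ≥ h. Then |sin(πt)| > h/2. -/
open Real

lemma sin_decomp (z : ℂ) :
    Complex.sin z = (Real.sin z.re * Real.cosh z.im : ℝ) +
      (Real.cos z.re * Real.sinh z.im : ℝ) * Complex.I := by
  conv_lhs => rw [← Complex.re_add_im z]
  rw [Complex.sin_add, Complex.sin_mul_I, Complex.cos_mul_I]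
  push_cast
  ring

lemma norm_sin_sq (z : ℂ) :
    ‖Complex.sin z‖ ^ 2 = Real.sin z.re ^ 2 + Real.sinh z.im ^ 2 := by
  rw [sin_decomp z, Complex.sq_norm, Complex.normSq_apply]
  simp only [Complex.add_re, Complex.add_im, Complex.ofReal_re, Complex.ofReal_im,
    Complex.mul_re, Complex.mul_im, Complex.I_re, Complex.I_im]
  have hc : Real.cosh z.im ^ 2 = 1 + Real.sinh z.im ^ 2 := by
    rw [Real.cosh_sq]; ring
  nlinarith [Real.sin_sq_add_cos_sq z.re]

lemma norm_sin_ge_sin (z : ℂ) : |Real.sin z.re| ≤ ‖Complex.sin z‖ := by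
  have key : Real.sin z.re ^ 2 ≤ ‖Complex.sin z‖ ^ 2 := by
    rw [norm_sin_sq]; nlinarith [sq_nonneg (Real.sinh z.im)]
  nlinarith [abs_nonneg (Real.sin z.re), norm_nonneg (Complex.sin z),
    sq_abs (Real.sin z.re)]

lemma norm_sin_ge_sinh (z : ℂ) : |Real.sinh z.im| ≤ ‖Complex.sin z‖ := by
  have key : Real.sinh z.im ^ 2 ≤ ‖Complex.sin z‖ ^ 2 := by
    rw [norm_sin_sq]; nlinarith [sq_nonneg (Real.sin z.re)]
  nlinarith [abs_nonneg (Real.sinh z.im), norm_nonneg (Complex.sin z),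
    sq_abs (Real.sinh z.im)]

lemma abs_sin_pi_ge (b : ℝ) (hb : |b| ≤ 1/2) : 2 * |b| ≤ |Real.sin (π * b)| := by
  have h1 : |π * b| ≤ π / 2 := by
    rw [abs_mul, abs_of_pos Real.pi_pos]
    nlinarith [Real.pi_pos]
  have h2 := Real.mul_abs_le_abs_sin h1
  rw [abs_mul, abs_of_pos Real.pi_pos] at h2
  have hπ := Real.pi_pos
  calc 2 * |b| = 2 / π * (π * |b|) := by field_simp
    _ ≤ _ := h2

lemma quarter_lt (h b : ℝ) (hh0 : 0 < h) (hb : 3/4 * h ^ 2 < b ^ 2) : h / 4 < |b| := by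
  nlinarith [sq_abs b, abs_nonneg b]

/-- For `h ∈ (0,1/10)` and `t` in the region `D_h(0,1)`
(i.e. `|Im t| ≤ 2h`, `−h ≤ Re t ≤ 2−h`, `|t| ≥ h`, `|t−1| ≥ h`),
one has `|sin(πt)| > h/2`. -/
theorem stmt3 (h : ℝ) (hh : h ∈ Set.Ioo (0:ℝ) (1/10)) (t : ℂ)
    (h1 : |t.im| ≤ 2 * h) (h2 : -h ≤ t.re) (h3 : t.re ≤ 2 - h)
    (h4 : h ≤ ‖t‖) (h5 : h ≤ ‖t - 1‖) :
    h / 2 < ‖Complex.sin ((Real.pi : ℂ) * t)‖ := by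
  obtain ⟨hh0, hh1⟩ := hh
  have hπ := Real.pi_pos
  have hπ3 : (3:ℝ) < π := by nlinarith [Real.pi_gt_three]
  have hzre : ((Real.pi : ℂ) * t).re = π * t.re := by
    simp [Complex.mul_re]
  have hzim : ((Real.pi : ℂ) * t).im = π * t.im := by
    simp [Complex.mul_im]
  by_cases hy : h / 2 ≤ |t.im|
  · -- use sinh bound
    have hb := norm_sin_ge_sinh ((Real.pi : ℂ) * t)
    rw [hzim, Real.abs_sinh] at hb
    have habs : |π * t.im| = π * |t.im| := by
      rw [abs_mul, abs_of_pos hπ]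
    rw [habs] at hb
    have hs : π * |t.im| ≤ Real.sinh (π * |t.im|) :=
      Real.self_le_sinh_iff.mpr (by positivity)
    nlinarith [abs_nonneg t.im]
  · push_neg at hy
    -- real part bounds
    have ht2 : h ^ 2 ≤ t.re ^ 2 + t.im ^ 2 := by
      have e : ‖t‖ ^ 2 = t.re ^ 2 + t.im ^ 2 := by
        rw [Complex.sq_norm, Complex.normSq_apply]; ring
      nlinarith [norm_nonneg t]
    have ht2' : h ^ 2 ≤ (t.re - 1) ^ 2 + t.im ^ 2 := by
      have e : ‖t - 1‖ ^ 2 = (t.re - 1) ^ 2 + t.im ^ 2 := by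
        rw [Complex.sq_norm, Complex.normSq_apply]
        simp [Complex.sub_re, Complex.sub_im]; ring
      nlinarith [norm_nonneg (t - 1)]
    have him : t.im ^ 2 < h ^ 2 / 4 := by
      nlinarith [sq_abs t.im, abs_nonneg t.im]
    have hx0 : (3:ℝ)/4 * h ^ 2 < t.re ^ 2 := by linarith
    have hx1 : (3:ℝ)/4 * h ^ 2 < (t.re - 1) ^ 2 := by linarith
    have hb := norm_sin_ge_sin ((Real.pi : ℂ) * t)
    rw [hzre] at hb
    -- case on position of t.re
    rcases le_or_gt t.re (1/2) with hc1 | hc1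
    · have hbb : |t.re| ≤ 1/2 := by
        rw [abs_le]; constructor <;> linarith
      have key := abs_sin_pi_ge t.re hbb
      have h14 := quarter_lt h t.re hh0 hx0
      linarith
    rcases le_or_gt t.re (3/2) with hc2 | hc2
    · have hbb : |t.re - 1| ≤ 1/2 := by
        rw [abs_le]; constructor <;> linarith
      have key := abs_sin_pi_ge (t.re - 1) hbb
      have e : Real.sin (π * t.re) = -Real.sin (π * (t.re - 1)) := by
        rw [show π * t.re = π * (t.re - 1) + π by ring, Real.sin_add_pi]
      rw [e, abs_neg] at hb
      have h14 := quarter_lt h (t.re - 1) hh0 hx1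
      linarith
    · have hbb : |t.re - 2| ≤ 1/2 := by
        rw [abs_le]; constructor <;> linarith
      have key := abs_sin_pi_ge (t.re - 2) hbb
      have e : Real.sin (π * t.re) = Real.sin (π * (t.re - 2)) := by
        rw [show π * t.re = π * (t.re - 2) + 2 * π by ring, Real.sin_add_two_pi]
      rw [e] at hb
      have hxabs : h ≤ |t.re - 2| := le_abs.mpr (Or.inr (by linarith))
      linarith
end

section
/- Let F : ℂ → ℂ be an entire function such that |F(λ) − 2cos(πλ)| ≤ C/|λ| for all |λ| ≥ R. Fix h ∈ (0,1/10) and t ∈ ℂ with |sin(πt)| > h/2. Then there exist M > 0 and N ∈ ℕ such that for every integer n with |n| > N, the equation F(λ) = 2cos(πt) has exactly one solution λ (counted with multiplicity) in the disk {λ : |λ − (2n + t)| < M/|n|}, and exactly one solution in the disk {λ : |λ − (2n − t)| < M/|n|}. -/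
set_option maxHeartbeats 1000000

open Complex Metric Set

private lemma norm_cos_le_exp (w : ℂ) : ‖Complex.cos w‖ ≤ Real.exp |w.im| := by
  have h2 : (2:ℂ) * Complex.cos w = Complex.exp (w * Complex.I) + Complex.exp (-w * Complex.I) :=
    Complex.two_cos w
  have h3 : ‖Complex.exp (w * Complex.I)‖ = Real.exp (-(w.im)) := by
    rw [Complex.norm_exp, Complex.mul_I_re]
  have h4 : ‖Complex.exp (-w * Complex.I)‖ = Real.exp (w.im) := by
    rw [Complex.norm_exp]
    simp [Complex.mul_I_re]
  have h5 : ‖(2:ℂ) * Complex.cos w‖ ≤ Real.exp (-(w.im)) + Real.exp w.im := by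
    rw [h2]
    exact (norm_add_le _ _).trans (by rw [h3, h4])
  have h6 : ‖(2:ℂ) * Complex.cos w‖ = 2 * ‖Complex.cos w‖ := by
    rw [norm_mul]; norm_num
  have e1 : Real.exp (-(w.im)) ≤ Real.exp |w.im| := Real.exp_le_exp.2 (neg_le_abs _)
  have e2 : Real.exp (w.im) ≤ Real.exp |w.im| := Real.exp_le_exp.2 (le_abs_self _)
  nlinarith

private lemma hasDerivAt_cos2 (z : ℂ) :
    HasDerivAt (fun z : ℂ => 2 * Complex.cos ((Real.pi : ℂ) * z))
      (-(2 * (Real.pi : ℂ)) * Complex.sin ((Real.pi : ℂ) * z)) z := by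
  have h1 : HasDerivAt (fun z : ℂ => (Real.pi : ℂ) * z) ((Real.pi : ℂ)) z := by
    simpa using (hasDerivAt_id z).const_mul (Real.pi : ℂ)
  have h2 : HasDerivAt (fun z : ℂ => Complex.cos ((Real.pi : ℂ) * z))
      (-Complex.sin ((Real.pi : ℂ) * z) * (Real.pi : ℂ)) z :=
    (Complex.hasDerivAt_cos ((Real.pi : ℂ) * z)).comp z h1
  have h3 := h2.const_mul (2:ℂ)
  rw [show (2:ℂ) * (-Complex.sin ((Real.pi : ℂ) * z) * (Real.pi : ℂ))
      = -(2 * (Real.pi : ℂ)) * Complex.sin ((Real.pi : ℂ) * z) from by ring] at h3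
  exact h3

private lemma hasDerivAt_sinpi (z : ℂ) :
    HasDerivAt (fun z : ℂ => Complex.sin ((Real.pi : ℂ) * z))
      ((Real.pi : ℂ) * Complex.cos ((Real.pi : ℂ) * z)) z := by
  have h1 : HasDerivAt (fun z : ℂ => (Real.pi : ℂ) * z) ((Real.pi : ℂ)) z := by
    simpa using (hasDerivAt_id z).const_mul (Real.pi : ℂ)
  have h2 : HasDerivAt (fun z : ℂ => Complex.sin ((Real.pi : ℂ) * z))
      (Complex.cos ((Real.pi : ℂ) * z) * (Real.pi : ℂ)) z :=
    (Complex.hasDerivAt_sin ((Real.pi : ℂ) * z)).comp z h1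
  rw [mul_comm] at h2
  exact h2

private lemma sin_shift (n : ℤ) (s : ℂ) :
    Complex.sin ((Real.pi : ℂ) * (2 * (n:ℂ) + s)) = Complex.sin ((Real.pi : ℂ) * s) := by
  have : (Real.pi : ℂ) * (2 * (n:ℂ) + s) = (Real.pi : ℂ) * s + (n : ℂ) * (2 * (Real.pi : ℂ)) := by
    ring
  rw [this, Complex.sin_add_int_mul_two_pi]

private lemma cos_shift (n : ℤ) (s : ℂ) :
    Complex.cos ((Real.pi : ℂ) * (2 * (n:ℂ) + s)) = Complex.cos ((Real.pi : ℂ) * s) := by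
  have : (Real.pi : ℂ) * (2 * (n:ℂ) + s) = (Real.pi : ℂ) * s + (n : ℂ) * (2 * (Real.pi : ℂ)) := by
    ring
  rw [this, Complex.cos_add_int_mul_two_pi]


private lemma aux_loc (F : ℂ → ℂ) (hF : Differentiable ℂ F) (C R : ℝ)
    (hbound : ∀ z : ℂ, R ≤ ‖z‖ → ‖F z - 2 * Complex.cos ((Real.pi : ℂ) * z)‖ ≤ C / ‖z‖)
    (s : ℂ) (hσ : 0 < ‖Complex.sin ((Real.pi : ℂ) * s)‖) :
    ∃ M₀ > (0:ℝ), ∀ M, M₀ ≤ M → ∃ N : ℕ, ∀ n : ℤ, (N : ℤ) < |n| →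
      (∃! z : ℂ, z ∈ Metric.ball (2 * (n : ℂ) + s) (M / |(n : ℝ)|) ∧
          F z = 2 * Complex.cos ((Real.pi : ℂ) * s)) ∧
        ∀ z ∈ Metric.ball (2 * (n : ℂ) + s) (M / |(n : ℝ)|),
          F z = 2 * Complex.cos ((Real.pi : ℂ) * s) → deriv F z ≠ 0 := by
  have hπ : 0 < Real.pi := Real.pi_pos
  set σ : ℝ := ‖Complex.sin ((Real.pi : ℂ) * s)‖ with hσdef
  set C' : ℝ := max C 1 with hC'def
  have hC' : 0 < C' := lt_of_lt_of_le one_pos (le_max_right _ _)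
  have hCC' : C ≤ C' := le_max_left _ _
  set K : ℝ := Real.exp (Real.pi * (‖s‖ + 1)) with hKdef
  have hK0 : 0 < K := Real.exp_pos _
  set r₀ : ℝ := min 1 (σ / (4 * Real.pi * K)) with hr₀def
  have hr₀ : 0 < r₀ := lt_min one_pos (div_pos hσ (by positivity))
  have hr₀1 : r₀ ≤ 1 := min_le_left _ _
  have hr₀2 : r₀ ≤ σ / (4 * Real.pi * K) := min_le_right _ _
  set a : ℂ := -(2 * (Real.pi : ℂ)) * Complex.sin ((Real.pi : ℂ) * s) with hadef
  have hna : ‖a‖ = 2 * Real.pi * σ := by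
    rw [hadef, norm_mul, norm_neg]
    congr 1
    rw [show (2 * (Real.pi : ℂ)) = ((2 * Real.pi : ℝ) : ℂ) from by push_cast; ring,
      Complex.norm_real, Real.norm_eq_abs, abs_of_pos (by positivity)]
  have ha0 : a ≠ 0 := by
    intro h0
    rw [h0, norm_zero] at hna
    nlinarith
  refine ⟨3 * C' / (Real.pi * σ), by positivity, fun M hM => ?_⟩
  have hM0 : 0 < M := lt_of_lt_of_le (by positivity) hM
  set X : ℝ := max R 0 + ‖s‖ + 12 * C' / (r₀ * Real.pi * σ) + 2 * M / r₀ + 1 with hXdef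
  refine ⟨⌈X⌉₊, fun n hn => ?_⟩
  set ν : ℝ := |(n : ℝ)| with hνdef
  have hνX : X < ν := by
    have h1 : X ≤ (⌈X⌉₊ : ℝ) := Nat.le_ceil X
    have h2 : ((⌈X⌉₊ : ℤ) : ℝ) < ((|n| : ℤ) : ℝ) := by exact_mod_cast hn
    rw [Int.cast_abs] at h2
    push_cast at h2
    linarith
  have hterm1 : max R 0 + ‖s‖ + 1 ≤ X := by
    have : 0 ≤ 12 * C' / (r₀ * Real.pi * σ) := by positivity
    have : 0 ≤ 2 * M / r₀ := by positivity
    rw [hXdef]; linarith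
  have hterm2 : 12 * C' / (r₀ * Real.pi * σ) ≤ X := by
    have h1 : 0 ≤ max R 0 := le_max_right _ _
    have h2 : 0 ≤ ‖s‖ := norm_nonneg _
    have h3 : 0 ≤ 2 * M / r₀ := by positivity
    rw [hXdef]; linarith
  have hterm3 : 2 * M / r₀ ≤ X := by
    have h1 : 0 ≤ max R 0 := le_max_right _ _
    have h2 : 0 ≤ ‖s‖ := norm_nonneg _
    have h3 : 0 ≤ 12 * C' / (r₀ * Real.pi * σ) := by positivity
    rw [hXdef]; linarith
  have hν0 : 0 < ν := by
    have : (1:ℝ) ≤ X := by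
      have h1 : 0 ≤ max R 0 := le_max_right _ _
      have h2 : 0 ≤ ‖s‖ := norm_nonneg _
      have h3 : 0 ≤ 12 * C' / (r₀ * Real.pi * σ) := by positivity
      have h4 : 0 ≤ 2 * M / r₀ := by positivity
      rw [hXdef]; linarith
    linarith
  set lam : ℂ := 2 * (n : ℂ) + s with hlamdef
  have hlam_im : lam.im = s.im := by simp [hlamdef]
  have hlam_norm : 2 * ν - ‖s‖ ≤ ‖lam‖ := by
    have h1 : ‖(2 * (n:ℂ))‖ = 2 * ν := by
      rw [norm_mul, show ((n:ℂ)) = (((n:ℝ)):ℂ) from by push_cast; ring, Complex.norm_real,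
        Real.norm_eq_abs]
      norm_num
      rw [hνdef]
    calc 2 * ν - ‖s‖ = ‖(2 * (n:ℂ))‖ - ‖s‖ := by rw [h1]
      _ ≤ ‖2 * (n:ℂ) + s‖ := by
          have h2 : ‖(2 * (n:ℂ))‖ ≤ ‖2 * (n:ℂ) + s‖ + ‖s‖ := by
            calc ‖(2 * (n:ℂ))‖ = ‖(2 * (n:ℂ) + s) - s‖ := by ring_nf
              _ ≤ _ := norm_sub_le _ _
          linarith
      _ = ‖lam‖ := rfl
  -- points of the big ball have large norm
  have hznorm : ∀ z ∈ Metric.closedBall lam r₀, ν ≤ ‖z‖ ∧ R ≤ ‖z‖ := by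
    intro z hz
    rw [Metric.mem_closedBall, dist_eq_norm] at hz
    have h1 : ‖lam‖ - ‖z - lam‖ ≤ ‖z‖ := by
      have : ‖lam‖ = ‖z - (z - lam)‖ := by ring_nf
      calc ‖lam‖ - ‖z - lam‖ = ‖z - (z - lam)‖ - ‖z - lam‖ := by rw [← this]
        _ ≤ ‖z‖ := by linarith [norm_sub_le z (z - lam)]
    have h2 : 2 * ν - ‖s‖ - 1 ≤ ‖z‖ := by linarith
    have h3 : max R 0 + ‖s‖ + 1 ≤ ν := le_of_lt (lt_of_le_of_lt hterm1 hνX)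
    constructor
    · have : 0 ≤ max R 0 := le_max_right _ _
      linarith
    · have : R ≤ max R 0 := le_max_left _ _
      linarith
  -- the error term E
  set E : ℂ → ℂ := fun z => F z - 2 * Complex.cos ((Real.pi : ℂ) * z) with hEdef
  have hEdiff : Differentiable ℂ E :=
    hF.sub (fun z => (hasDerivAt_cos2 z).differentiableAt)
  have hEbound : ∀ z ∈ Metric.closedBall lam r₀, ‖E z‖ ≤ C' / ν := by
    intro z hz
    obtain ⟨hz1, hz2⟩ := hznorm z hz
    have hz0 : 0 < ‖z‖ := lt_of_lt_of_le hν0 hz1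
    calc ‖E z‖ ≤ C / ‖z‖ := hbound z hz2
      _ ≤ C' / ‖z‖ := by gcongr
      _ ≤ C' / ν := by gcongr
  -- Cauchy-type estimate on deriv E via the Schwarz lemma
  have hE' : ∀ z ∈ Metric.closedBall lam (r₀ / 2), ‖deriv E z‖ ≤ 6 * C' / (r₀ * ν) := by
    intro z hz
    rw [Metric.mem_closedBall, dist_eq_norm] at hz
    have hmaps : Set.MapsTo E (Metric.ball z (r₀ / 2)) (Metric.ball (E z) (3 * C' / ν)) := by
      intro y hy
      rw [Metric.mem_ball, dist_eq_norm] at hy ⊢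
      have hyball : y ∈ Metric.closedBall lam r₀ := by
        rw [Metric.mem_closedBall, dist_eq_norm]
        calc ‖y - lam‖ = ‖(y - z) + (z - lam)‖ := by ring_nf
          _ ≤ ‖y - z‖ + ‖z - lam‖ := norm_add_le _ _
          _ ≤ r₀ := by linarith
      have hzball : z ∈ Metric.closedBall lam r₀ := by
        rw [Metric.mem_closedBall, dist_eq_norm]; linarith
      have := hEbound y hyball
      have := hEbound z hzball
      have hpos : 0 < C' / ν := by positivity
      calc ‖E y - E z‖ ≤ ‖E y‖ + ‖E z‖ := norm_sub_le _ _
        _ ≤ 2 * (C' / ν) := by linarith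
        _ < 3 * C' / ν := by rw [mul_div_assoc]; linarith
    have := Complex.norm_deriv_le_div_of_mapsTo_ball (hEdiff.differentiableOn) (hmaps.mono_right Metric.ball_subset_closedBall)
      (half_pos hr₀)
    calc ‖deriv E z‖ ≤ (3 * C' / ν) / (r₀ / 2) := this
      _ = 6 * C' / (r₀ * ν) := by field_simp; ring
  have hE'small : 6 * C' / (r₀ * ν) ≤ Real.pi * σ / 2 := by
    have h2 : 12 * C' / (r₀ * Real.pi * σ) ≤ ν := le_of_lt (lt_of_le_of_lt hterm2 hνX)
    rw [div_le_iff₀ (by positivity)] at h2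
    rw [div_le_div_iff₀ (by positivity) (by norm_num)]
    nlinarith
  -- mean value bound for sin on the big ball
  have hsinlam : Complex.sin ((Real.pi : ℂ) * lam) = Complex.sin ((Real.pi : ℂ) * s) :=
    sin_shift n s
  have hsinMVT : ∀ z ∈ Metric.closedBall lam r₀,
      ‖Complex.sin ((Real.pi : ℂ) * z) - Complex.sin ((Real.pi : ℂ) * s)‖
        ≤ Real.pi * K * ‖z - lam‖ := by
    intro z hz
    have hbd : ∀ x ∈ Metric.closedBall lam r₀,
        ‖(Real.pi : ℂ) * Complex.cos ((Real.pi : ℂ) * x)‖ ≤ Real.pi * K := by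
      intro x hx
      rw [Metric.mem_closedBall, dist_eq_norm] at hx
      have him : |x.im| ≤ ‖s‖ + 1 := by
        have h1 : |x.im - lam.im| ≤ ‖x - lam‖ := by
          have := Complex.abs_im_le_norm (x - lam)
          rw [Complex.sub_im] at this
          simpa using this
        have h2 : |s.im| ≤ ‖s‖ := by
          have := Complex.abs_im_le_norm s
          simpa using this
        have h3 : |x.im| ≤ |x.im - lam.im| + |lam.im| := by
          have := abs_add_le (x.im - lam.im) lam.im
          simpa using this
        rw [hlam_im] at h1 h3
        linarith
      have hcos : ‖Complex.cos ((Real.pi : ℂ) * x)‖ ≤ K := by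
        have h1 := norm_cos_le_exp ((Real.pi : ℂ) * x)
        have h2 : ((Real.pi : ℂ) * x).im = Real.pi * x.im := by
          simp [Complex.mul_im]
        rw [h2] at h1
        refine h1.trans ?_
        rw [hKdef]
        apply Real.exp_le_exp.2
        rw [abs_mul, abs_of_pos hπ]
        have := abs_nonneg x.im
        nlinarith
      rw [norm_mul]
      have hπn : ‖((Real.pi : ℝ) : ℂ)‖ = Real.pi := by
        rw [Complex.norm_real, Real.norm_eq_abs, abs_of_pos hπ]
      rw [hπn]
      nlinarith [norm_nonneg (Complex.cos ((Real.pi : ℂ) * x))]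
    have := (convex_closedBall lam r₀).norm_image_sub_le_of_norm_hasDerivWithin_le
      (f := fun x : ℂ => Complex.sin ((Real.pi : ℂ) * x))
      (f' := fun x : ℂ => (Real.pi : ℂ) * Complex.cos ((Real.pi : ℂ) * x))
      (fun x _ => (hasDerivAt_sinpi x).hasDerivWithinAt) hbd
      (Metric.mem_closedBall_self hr₀.le) hz
    simpa only [hsinlam] using this
  -- deriv F is close to a on the half ball
  have hF' : ∀ z ∈ Metric.closedBall lam (r₀ / 2), ‖deriv F z - a‖ ≤ Real.pi * σ := by
    intro z hz
    have hzbig : z ∈ Metric.closedBall lam r₀ :=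
      Metric.closedBall_subset_closedBall (by linarith) hz
    have hFz : HasDerivAt F (deriv E z + -(2 * (Real.pi : ℂ)) * Complex.sin ((Real.pi : ℂ) * z))
        z := by
      have h := ((hEdiff z).hasDerivAt.add (hasDerivAt_cos2 z))
      have hfun : (fun w => E w + 2 * Complex.cos ((Real.pi : ℂ) * w)) = F := by
        funext w; rw [hEdef]; ring
      rw [← hfun]
      exact h
    rw [hFz.deriv]
    have h1 : ‖-(2 * (Real.pi : ℂ)) * Complex.sin ((Real.pi : ℂ) * z) - a‖
        ≤ Real.pi * σ / 2 := by
      have heq : -(2 * (Real.pi : ℂ)) * Complex.sin ((Real.pi : ℂ) * z) - a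
          = -(2 * (Real.pi : ℂ)) * (Complex.sin ((Real.pi : ℂ) * z)
            - Complex.sin ((Real.pi : ℂ) * s)) := by
        rw [hadef]; ring
      rw [heq, norm_mul, norm_neg]
      have hn2 : ‖(2 * (Real.pi : ℂ))‖ = 2 * Real.pi := by
        rw [show (2 * (Real.pi : ℂ)) = ((2 * Real.pi : ℝ) : ℂ) from by push_cast; ring,
          Complex.norm_real, Real.norm_eq_abs, abs_of_pos (by positivity)]
      rw [hn2]
      have h2 := hsinMVT z hzbig
      rw [Metric.mem_closedBall, dist_eq_norm] at hz
      have h3 : ‖Complex.sin ((Real.pi : ℂ) * z) - Complex.sin ((Real.pi : ℂ) * s)‖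
          ≤ Real.pi * K * (r₀ / 2) := by
        refine h2.trans ?_
        exact mul_le_mul_of_nonneg_left hz (by positivity)
      have h5 : r₀ * (4 * Real.pi * K) ≤ σ := by
        have := hr₀2
        rw [le_div_iff₀ (by positivity)] at this
        exact this
      have h4 : Real.pi * K * (r₀ / 2) ≤ σ / 8 := by nlinarith
      have h6 := h3.trans h4
      calc 2 * Real.pi * ‖Complex.sin ((Real.pi : ℂ) * z) - Complex.sin ((Real.pi : ℂ) * s)‖
          ≤ 2 * Real.pi * (σ / 8) := mul_le_mul_of_nonneg_left h6 (by positivity)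
        _ ≤ Real.pi * σ / 2 := by nlinarith
    have h2 := hE' z hz
    calc ‖deriv E z + -(2 * (Real.pi : ℂ)) * Complex.sin ((Real.pi : ℂ) * z) - a‖
        ≤ ‖deriv E z‖ + ‖-(2 * (Real.pi : ℂ)) * Complex.sin ((Real.pi : ℂ) * z) - a‖ := by
          have := norm_add_le (deriv E z)
            (-(2 * (Real.pi : ℂ)) * Complex.sin ((Real.pi : ℂ) * z) - a)
          rw [show deriv E z + (-(2 * (Real.pi : ℂ)) * Complex.sin ((Real.pi : ℂ) * z) - a)
            = deriv E z + -(2 * (Real.pi : ℂ)) * Complex.sin ((Real.pi : ℂ) * z) - a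
            from by ring] at this
          exact this
      _ ≤ 6 * C' / (r₀ * ν) + Real.pi * σ / 2 := by linarith
      _ ≤ Real.pi * σ := by linarith [hE'small]
  -- deriv F is nonzero on the half ball
  have hderiv_ne : ∀ z ∈ Metric.closedBall lam (r₀ / 2), deriv F z ≠ 0 := by
    intro z hz h0
    have h1 := hF' z hz
    rw [h0, zero_sub, norm_neg, hna] at h1
    nlinarith
  -- Lipschitz bound for F minus linear part
  have hlip : ∀ z ∈ Metric.closedBall lam (r₀ / 2), ∀ y ∈ Metric.closedBall lam (r₀ / 2),
      ‖(F z - F y) - a * (z - y)‖ ≤ Real.pi * σ * ‖z - y‖ := by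
    intro z hz y hy
    have := (convex_closedBall lam (r₀ / 2)).norm_image_sub_le_of_norm_hasDerivWithin_le
      (f := fun w : ℂ => F w - a * w) (f' := fun w : ℂ => deriv F w - a)
      (fun x _ => ((hF x).hasDerivAt.sub (by simpa using (hasDerivAt_id x).const_mul a)
        ).hasDerivWithinAt)
      (fun x hx => hF' x hx) hy hz
    rw [show (F z - a * z) - (F y - a * y) = (F z - F y) - a * (z - y) from by ring] at this
    rw [show z - y = -(y - z) from by ring, norm_neg] at this ⊢
    exact this
  -- setup for the contraction argument
  set w : ℂ := 2 * Complex.cos ((Real.pi : ℂ) * s) with hwdef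
  set r : ℝ := M / ν with hrdef
  have hr0 : 0 < r := div_pos hM0 hν0
  have hrr₀ : r ≤ r₀ / 2 := by
    have h1 : 2 * M / r₀ ≤ ν := le_of_lt (lt_of_le_of_lt hterm3 hνX)
    rw [div_le_iff₀ (by positivity)] at h1
    rw [hrdef, div_le_div_iff₀ hν0 (by norm_num)]
    nlinarith
  have hball_sub : Metric.ball lam r ⊆ Metric.closedBall lam (r₀ / 2) :=
    subset_trans Metric.ball_subset_closedBall (Metric.closedBall_subset_closedBall hrr₀)
  set ρ : ℝ := 3 * r / 4 with hρdef
  have hρ0 : 0 < ρ := by positivity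
  have hρr : ρ < r := by nlinarith
  have hρ_sub : Metric.closedBall lam ρ ⊆ Metric.closedBall lam (r₀ / 2) :=
    Metric.closedBall_subset_closedBall (by linarith)
  have hFlam : ‖F lam - w‖ ≤ C' / ν := by
    have h1 : F lam - w = E lam := by
      rw [hEdef, hwdef]
      simp only
      rw [cos_shift n s]
    rw [h1]
    exact hEbound lam (Metric.mem_closedBall_self hr₀.le)
  set Φ : ℂ → ℂ := fun z => z - (F z - w) / a with hΦdef
  -- Φ is a 1/2-contraction on the closed ball of radius ρ
  have hΦdist : ∀ z ∈ Metric.closedBall lam ρ, ∀ y ∈ Metric.closedBall lam ρ,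
      dist (Φ z) (Φ y) ≤ (1 / 2) * dist z y := by
    intro z hz y hy
    have hz' := hρ_sub hz
    have hy' := hρ_sub hy
    have h1 := hlip z hz' y hy'
    have h2 : Φ z - Φ y = -(((F z - F y) - a * (z - y)) / a) := by
      rw [hΦdef]
      field_simp
      ring
    rw [dist_eq_norm, h2, norm_neg, norm_div, hna, dist_eq_norm]
    rw [div_le_iff₀ (by positivity)]
    calc ‖F z - F y - a * (z - y)‖ ≤ Real.pi * σ * ‖z - y‖ := h1
      _ = 1 / 2 * ‖z - y‖ * (2 * Real.pi * σ) := by ring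
  have hΦmaps : Set.MapsTo Φ (Metric.closedBall lam ρ) (Metric.closedBall lam ρ) := by
    intro z hz
    have hlam_mem : lam ∈ Metric.closedBall lam ρ := Metric.mem_closedBall_self hρ0.le
    have h1 := hΦdist z hz lam hlam_mem
    have h2 : dist (Φ lam) lam ≤ C' / (ν * (2 * Real.pi * σ)) := by
      have h3 : Φ lam - lam = -((F lam - w) / a) := by rw [hΦdef]; ring
      rw [dist_eq_norm, h3, norm_neg, norm_div, hna]
      rw [div_le_div_iff₀ (by positivity) (by positivity)]
      calc ‖F lam - w‖ * (ν * (2 * Real.pi * σ)) ≤ (C' / ν) * (ν * (2 * Real.pi * σ)) := by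
            have := hFlam
            have hpos : (0:ℝ) ≤ ν * (2 * Real.pi * σ) := by positivity
            exact mul_le_mul_of_nonneg_right this hpos
        _ = C' * (2 * Real.pi * σ) := by field_simp
    have hsmall : C' / (ν * (2 * Real.pi * σ)) ≤ ρ / 2 := by
      have hMν : 3 * C' / (Real.pi * σ) ≤ M := hM
      rw [div_le_iff₀ (by positivity)] at hMν
      rw [div_le_iff₀ (by positivity)]
      have heq : ρ / 2 * (ν * (2 * Real.pi * σ)) = 3 * M * (Real.pi * σ) / 4 := by
        rw [hρdef, hrdef]
        field_simp
      rw [heq]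
      nlinarith [hσ, hπ]
    rw [Metric.mem_closedBall] at hz ⊢
    calc dist (Φ z) lam ≤ dist (Φ z) (Φ lam) + dist (Φ lam) lam := dist_triangle _ _ _
      _ ≤ (1/2) * dist z lam + C' / (ν * (2 * Real.pi * σ)) := by linarith
      _ ≤ (1/2) * ρ + ρ / 2 := by linarith
      _ = ρ := by ring
  -- Banach fixed point
  have hcomplete : IsComplete (Metric.closedBall lam ρ) :=
    Metric.isClosed_closedBall.isComplete
  have hcontr : ContractingWith (1/2 : NNReal) (hΦmaps.restrict Φ _ _) := by
    constructor
    · rw [← NNReal.coe_lt_coe]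
      norm_num
    · apply LipschitzOnWith.mapsToRestrict
      apply LipschitzOnWith.of_dist_le_mul
      intro x hx y hy
      have := hΦdist x hx y hy
      calc dist (Φ x) (Φ y) ≤ (1/2) * dist x y := this
        _ = ((1/2 : NNReal) : ℝ) * dist x y := by norm_num
  obtain ⟨y, hy_mem, hy_fix, -, -⟩ := hcontr.exists_fixedPoint' hcomplete hΦmaps
    (Metric.mem_closedBall_self hρ0.le) (edist_ne_top _ _)
  have hFy : F y = w := by
    have h1 : Φ y = y := hy_fix
    rw [hΦdef] at h1
    simp only at h1
    have h2 : (F y - w) / a = 0 := by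
      have := sub_eq_self.mp h1
      exact this
    rw [div_eq_zero_iff] at h2
    rcases h2 with h2 | h2
    · exact sub_eq_zero.mp h2
    · exact absurd h2 ha0
  have hy_ball : y ∈ Metric.ball lam r := by
    rw [Metric.mem_ball]
    rw [Metric.mem_closedBall] at hy_mem
    linarith
  -- uniqueness
  have huniq : ∀ x₁ ∈ Metric.ball lam r, F x₁ = w → ∀ x₂ ∈ Metric.ball lam r, F x₂ = w →
      x₁ = x₂ := by
    intro x₁ hx₁ hfx₁ x₂ hx₂ hfx₂
    have h1 := hlip x₁ (hball_sub hx₁) x₂ (hball_sub hx₂)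
    rw [hfx₁, hfx₂, sub_self, zero_sub, norm_neg, norm_mul, hna] at h1
    have h2 : ‖x₁ - x₂‖ = 0 := by nlinarith [norm_nonneg (x₁ - x₂), mul_pos hπ hσ]
    have := norm_eq_zero.mp h2
    exact sub_eq_zero.mp this
  refine ⟨⟨y, ⟨hy_ball, hFy⟩, ?_⟩, fun z hz _ => hderiv_ne z (hball_sub hz)⟩
  rintro x ⟨hx1, hx2⟩
  exact huniq x hx1 hx2 y hy_ball hFy

/-- Rouché-type localization of Bloch eigenvalues: if `F` is entire with
`|F(λ) − 2cos(πλ)| ≤ C/|λ|` for `|λ| ≥ R`, `h ∈ (0,1/10)` and `|sin(πt)| > h/2`,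
then there are `M > 0` and `N` such that for `|n| > N` the equation
`F(λ) = 2cos(πt)` has exactly one (simple) solution in each of the disks
of radius `M/|n|` around `2n + t` and `2n − t`. -/
theorem stmt4 (F : ℂ → ℂ) (hF : Differentiable ℂ F) (C R : ℝ)
    (hbound : ∀ z : ℂ, R ≤ ‖z‖ → ‖F z - 2 * Complex.cos ((Real.pi : ℂ) * z)‖ ≤ C / ‖z‖)
    (h : ℝ) (hh : h ∈ Set.Ioo (0:ℝ) (1/10)) (t : ℂ)
    (ht : h / 2 < ‖Complex.sin ((Real.pi : ℂ) * t)‖) :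
    ∃ M > (0:ℝ), ∃ N : ℕ, ∀ n : ℤ, (N : ℤ) < |n| →
      ((∃! z : ℂ, z ∈ Metric.ball (2 * (n : ℂ) + t) (M / |(n : ℝ)|) ∧
          F z = 2 * Complex.cos ((Real.pi : ℂ) * t)) ∧
        ∀ z ∈ Metric.ball (2 * (n : ℂ) + t) (M / |(n : ℝ)|),
          F z = 2 * Complex.cos ((Real.pi : ℂ) * t) → deriv F z ≠ 0) ∧
      ((∃! z : ℂ, z ∈ Metric.ball (2 * (n : ℂ) - t) (M / |(n : ℝ)|) ∧
          F z = 2 * Complex.cos ((Real.pi : ℂ) * t)) ∧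
        ∀ z ∈ Metric.ball (2 * (n : ℂ) - t) (M / |(n : ℝ)|),
          F z = 2 * Complex.cos ((Real.pi : ℂ) * t) → deriv F z ≠ 0) := by
  have hσt : 0 < ‖Complex.sin ((Real.pi : ℂ) * t)‖ := by
    have h0 : 0 < h / 2 := by linarith [hh.1]
    linarith
  have hσt' : 0 < ‖Complex.sin ((Real.pi : ℂ) * (-t))‖ := by
    rw [mul_neg, Complex.sin_neg, norm_neg]
    exact hσt
  obtain ⟨M₁, hM₁, H₁⟩ := aux_loc F hF C R hbound t hσt
  obtain ⟨M₂, hM₂, H₂⟩ := aux_loc F hF C R hbound (-t) hσt'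
  set M : ℝ := max M₁ M₂ with hMdef
  obtain ⟨N₁, h₁⟩ := H₁ M (le_max_left _ _)
  obtain ⟨N₂, h₂⟩ := H₂ M (le_max_right _ _)
  refine ⟨M, lt_of_lt_of_le hM₁ (le_max_left _ _), max N₁ N₂, fun n hn => ?_⟩
  have hn₁ : (N₁ : ℤ) < |n| :=
    lt_of_le_of_lt (by exact_mod_cast Nat.cast_le.mpr (le_max_left N₁ N₂)) hn
  have hn₂ : (N₂ : ℤ) < |n| :=
    lt_of_le_of_lt (by exact_mod_cast Nat.cast_le.mpr (le_max_right N₁ N₂)) hn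
  refine ⟨h₁ n hn₁, ?_⟩
  have := h₂ n hn₂
  rw [show (2 * (n:ℂ) + -t) = 2 * (n:ℂ) - t from by ring] at this
  rw [show Complex.cos ((Real.pi : ℂ) * (-t)) = Complex.cos ((Real.pi : ℂ) * t) from by
    rw [mul_neg, Complex.cos_neg]] at this
  exact this
end

section
/- Let F be entire with F(λ₀) = 2cos(πt₀), F^{(k)}(λ₀) = 0 for 1 ≤ k ≤ m−1, F^{(m)}(λ₀) ≠ 0, where t₀ ∈ ℂ with sin(πt₀) ≠ 0. Suppose λ(t) is a continuous function on a punctured neighborhood of t₀ with λ(t) → λ₀ as t → t₀ and F(λ(t)) = 2cos(πt). Then |λ(t) − λ₀| ∼ |t − t₀|^{1/m} as t → t₀, i.e., there exist constants 0 < c ≤ C such that c|t − t₀|^{1/m} ≤ |λ(t) − λ₀| ≤ C|t − t₀|^{1/m} for t near t₀. -/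
open Filter Topology Function

/-- If `F` is entire with `F(λ₀) = 2cos(πt₀)`, `F^{(k)}(λ₀) = 0` for `1 ≤ k ≤ m−1`,
`F^{(m)}(λ₀) ≠ 0`, `sin(πt₀) ≠ 0`, and `λ(t)` is continuous on a punctured
neighborhood of `t₀` with `λ(t) → λ₀` and `F(λ(t)) = 2cos(πt)`, then
`|λ(t) − λ₀| ∼ |t − t₀|^{1/m}` as `t → t₀`. -/
theorem stmt11 (F : ℂ → ℂ) (hF : Differentiable ℂ F) (lam₀ t₀ : ℂ) (m : ℕ) (hm : 1 ≤ m)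
    (hval : F lam₀ = 2 * Complex.cos ((Real.pi : ℂ) * t₀))
    (hzero : ∀ k : ℕ, 1 ≤ k → k ≤ m - 1 → iteratedDeriv k F lam₀ = 0)
    (hne : iteratedDeriv m F lam₀ ≠ 0)
    (hsin : Complex.sin ((Real.pi : ℂ) * t₀) ≠ 0)
    (lam : ℂ → ℂ) (U : Set ℂ) (hU : U ∈ nhds t₀)
    (hcont : ContinuousOn lam (U \ {t₀}))
    (hlim : Tendsto lam (nhdsWithin t₀ {t₀}ᶜ) (nhds lam₀))
    (heq : ∀ t ∈ U \ {t₀}, F (lam t) = 2 * Complex.cos ((Real.pi : ℂ) * t)) :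
    ∃ c C : ℝ, 0 < c ∧ c ≤ C ∧
      ∀ᶠ t in nhdsWithin t₀ {t₀}ᶜ,
        c * ‖t - t₀‖ ^ ((1 : ℝ) / m) ≤ ‖lam t - lam₀‖ ∧
        ‖lam t - lam₀‖ ≤ C * ‖t - t₀‖ ^ ((1 : ℝ) / m) := by
  have hπ : ((Real.pi : ℂ)) ≠ 0 := by
    simpa using Real.pi_ne_zero
  set c₀ : ℂ := 2 * Complex.cos ((Real.pi : ℂ) * t₀) with hc₀def
  set G : ℂ → ℂ := fun z => F z - c₀ with hGdef
  have hGdiff : Differentiable ℂ G := hF.sub_const c₀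
  have hG0 : G lam₀ = 0 := by simp [hGdef, hval]
  have hderivGF : deriv G = deriv F := funext fun z => deriv_sub_const c₀
  have hGD : ∀ k : ℕ, 1 ≤ k → iteratedDeriv k G lam₀ = iteratedDeriv k F lam₀ := by
    intro k hk
    obtain ⟨j, rfl⟩ : ∃ j, k = j + 1 := ⟨k - 1, by omega⟩
    rw [iteratedDeriv_succ', iteratedDeriv_succ', hderivGF]
  have hGan : AnalyticAt ℂ G lam₀ := hGdiff.analyticAt lam₀
  obtain ⟨p, hp⟩ := hGan
  obtain ⟨r, hpr⟩ := id hp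
  have hcoeff : ∀ k : ℕ, (Nat.factorial k : ℂ) * p.coeff k = iteratedDeriv k G lam₀ := by
    intro k
    calc (Nat.factorial k : ℂ) * p.coeff k = Nat.factorial k • p k (fun _ => (1 : ℂ)) := by
          rw [← nsmul_eq_mul]; rfl
      _ = iteratedFDeriv ℂ k G lam₀ (fun _ => 1) := hpr.factorial_smul 1 k
      _ = iteratedDeriv k G lam₀ := (iteratedDeriv_eq_iteratedFDeriv).symm
  have pc0 : p.coeff 0 = 0 := by
    have h := hp.coeff_zero (fun _ => 1)
    rw [hG0] at h
    exact h
  have pclow : ∀ k : ℕ, k ≤ m - 1 → p.coeff k = 0 := by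
    intro k hk
    rcases Nat.eq_zero_or_pos k with rfl | hk1
    · exact pc0
    · have h0 : iteratedDeriv k G lam₀ = 0 := by
        rw [hGD k hk1]; exact hzero k hk1 hk
      have h := hcoeff k
      rw [h0] at h
      rcases mul_eq_zero.mp h with h | h
      · exact absurd h (by exact_mod_cast Nat.factorial_ne_zero k)
      · exact h
  have pcm : p.coeff m ≠ 0 := by
    intro h
    apply hne
    rw [← hGD m hm, ← hcoeff m, h, mul_zero]
  have hp0 : p ≠ 0 := by
    intro h
    apply pcm
    simp [h, FormalMultilinearSeries.coeff]
  have horder : p.order = m := by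
    have hmem : p m ≠ 0 := fun h => pcm (FormalMultilinearSeries.coeff_eq_zero.mpr h)
    have hle : p.order ≤ m := Nat.sInf_le hmem
    have hge : m ≤ p.order := by
      by_contra h
      push_neg at h
      have h1 : p.coeff p.order = 0 := pclow _ (by omega)
      exact p.apply_order_ne_zero hp0 (FormalMultilinearSeries.coeff_eq_zero.mp h1)
    omega
  set g : ℂ → ℂ := (swap dslope lam₀)^[m] G with hgdef
  have hg_an : AnalyticAt ℂ g lam₀ :=
    ⟨_, hp.has_fpower_series_iterate_dslope_fslope m⟩
  have hg_ne : g lam₀ ≠ 0 := by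
    have h := hp.iterate_dslope_fslope_ne_zero hp0
    rwa [horder] at h
  have hfac : ∀ᶠ z in 𝓝 lam₀, G z = (z - lam₀) ^ m • g z := by
    have h := hp.eq_pow_order_mul_iterate_dslope
    rw [horder] at h
    exact Filter.Eventually.of_forall h
  -- the cosine side
  set φ : ℂ → ℂ := fun t => 2 * Complex.cos ((Real.pi : ℂ) * t) - c₀ with hφdef
  have hφ0 : φ t₀ = 0 := sub_self _
  set dv : ℂ := 2 * (-Complex.sin ((Real.pi : ℂ) * t₀) * (Real.pi : ℂ)) with hdv
  have hdvne : dv ≠ 0 :=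
    mul_ne_zero two_ne_zero (mul_ne_zero (neg_ne_zero.mpr hsin) hπ)
  have hder : HasDerivAt φ dv t₀ := by
    have h1 : HasDerivAt (fun t : ℂ => (Real.pi : ℂ) * t) ((Real.pi : ℂ)) t₀ := by
      simpa using (hasDerivAt_id t₀).const_mul ((Real.pi : ℂ))
    have h2 : HasDerivAt (fun t : ℂ => Complex.cos ((Real.pi : ℂ) * t))
        (-Complex.sin ((Real.pi : ℂ) * t₀) * (Real.pi : ℂ)) t₀ := h1.ccos
    exact (h2.const_mul 2).sub_const c₀
  set d : ℝ := ‖dv‖ with hd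
  have hdpos : 0 < d := norm_pos_iff.mpr hdvne
  have hslope : Tendsto (fun t => ‖slope φ t₀ t‖) (𝓝[≠] t₀) (𝓝 d) :=
    (hasDerivAt_iff_tendsto_slope.mp hder).norm
  have hlow : ∀ᶠ t in 𝓝[≠] t₀, d / 2 < ‖slope φ t₀ t‖ :=
    hslope.eventually (eventually_gt_nhds (by linarith))
  have hhigh : ∀ᶠ t in 𝓝[≠] t₀, ‖slope φ t₀ t‖ < 2 * d :=
    hslope.eventually (eventually_lt_nhds (by linarith))
  -- g along lam
  set a : ℝ := ‖g lam₀‖ with ha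
  have hapos : 0 < a := norm_pos_iff.mpr hg_ne
  have hgl : Tendsto (fun t => ‖g (lam t)‖) (𝓝[≠] t₀) (𝓝 a) :=
    ((hg_an.continuousAt.tendsto).comp hlim).norm
  have hga : ∀ᶠ t in 𝓝[≠] t₀, a / 2 < ‖g (lam t)‖ :=
    hgl.eventually (eventually_gt_nhds (by linarith))
  have hgb : ∀ᶠ t in 𝓝[≠] t₀, ‖g (lam t)‖ < 2 * a :=
    hgl.eventually (eventually_lt_nhds (by linarith))
  have hUmem : ∀ᶠ t in 𝓝[≠] t₀, t ∈ U :=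
    eventually_mem_set.mpr (mem_nhdsWithin_of_mem_nhds hU)
  have hne' : ∀ᶠ t in 𝓝[≠] t₀, t ≠ t₀ := by
    have h : ∀ᶠ t in 𝓝[≠] t₀, t ∈ ({t₀}ᶜ : Set ℂ) := eventually_mem_set.mpr self_mem_nhdsWithin
    exact h.mono fun t ht => ht
  have hfac' : ∀ᶠ t in 𝓝[≠] t₀, G (lam t) = (lam t - lam₀) ^ m • g (lam t) :=
    hlim.eventually hfac
  have hmr : (0 : ℝ) ≤ 1 / m := by positivity
  refine ⟨(d / (4 * a)) ^ ((1 : ℝ) / m), (4 * d / a) ^ ((1 : ℝ) / m),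
    Real.rpow_pos_of_pos (by positivity) _, ?_, ?_⟩
  · apply Real.rpow_le_rpow (by positivity) ?_ hmr
    rw [div_le_div_iff₀ (by positivity) (by positivity)]
    nlinarith
  · filter_upwards [hlow, hhigh, hga, hgb, hUmem, hne', hfac'] with t h1 h2 h3 h4 h5 h6 h7
    have htne : t - t₀ ≠ 0 := sub_ne_zero.mpr h6
    have hr : (0 : ℝ) < ‖t - t₀‖ := norm_pos_iff.mpr htne
    have heqt : G (lam t) = φ t := by
      simp only [hGdef, hφdef]
      rw [heq t ⟨h5, by simpa using h6⟩]
    have hkey : ‖lam t - lam₀‖ ^ m * ‖g (lam t)‖ = ‖φ t‖ := by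
      rw [← heqt, h7, smul_eq_mul, norm_mul, norm_pow]
    have hsl : ‖slope φ t₀ t‖ = ‖φ t‖ / ‖t - t₀‖ := by
      rw [slope_def_field, hφ0, sub_zero, norm_div]
    rw [hsl] at h1 h2
    have hφlow : d / 2 * ‖t - t₀‖ ≤ ‖φ t‖ := by
      have h := mul_le_mul_of_nonneg_right (le_of_lt h1) hr.le
      rwa [div_mul_cancel₀ _ (ne_of_gt hr)] at h
    have hφhigh : ‖φ t‖ ≤ 2 * d * ‖t - t₀‖ := by
      have h := mul_le_mul_of_nonneg_right (le_of_lt h2) hr.le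
      rwa [div_mul_cancel₀ _ (ne_of_gt hr)] at h
    set x : ℝ := ‖lam t - lam₀‖ with hx
    have hx0 : (0 : ℝ) ≤ x := norm_nonneg _
    have hxm0 : (0 : ℝ) ≤ x ^ m := pow_nonneg hx0 m
    have hxmlow : d / (4 * a) * ‖t - t₀‖ ≤ x ^ m := by
      rw [div_mul_eq_mul_div, div_le_iff₀ (by positivity)]
      linarith [mul_le_mul_of_nonneg_left (le_of_lt h4) hxm0, hkey, hφlow]
    have hxmhigh : x ^ m ≤ 4 * d / a * ‖t - t₀‖ := by
      rw [div_mul_eq_mul_div, le_div_iff₀ (by positivity)]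
      linarith [mul_le_mul_of_nonneg_left (le_of_lt h3) hxm0, hkey, hφhigh]
    have hmm : (x ^ m) ^ ((1 : ℝ) / m) = x := by
      rw [one_div]
      exact Real.pow_rpow_inv_natCast hx0 (by omega)
    constructor
    · have h := Real.rpow_le_rpow (by positivity) hxmlow hmr
      rwa [Real.mul_rpow (by positivity) (norm_nonneg _), hmm] at h
    · have h := Real.rpow_le_rpow hxm0 hxmhigh hmr
      rwa [hmm, Real.mul_rpow (by positivity) (norm_nonneg _)] at h
end

section
/- Under the hypotheses of the previous statement (F entire with an m-fold zero structure of F − 2cos(πt₀) at λ₀, sin(πt₀) ≠ 0, and F(λ(t)) = 2cos(πt) with λ(t) → λ₀), one has |F'(λ(t))| ∼ |t − t₀|^{(m−1)/m} as t → t₀. -/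
open Filter

lemma factor_of_derivs (G : ℂ → ℂ) (hG : Differentiable ℂ G) (z₀ : ℂ) (m : ℕ)
    (h0 : ∀ k < m, iteratedDeriv k G z₀ = 0) (hne : iteratedDeriv m G z₀ ≠ 0) :
    ∃ g : ℂ → ℂ, AnalyticAt ℂ g z₀ ∧ g z₀ ≠ 0 ∧
      ∀ᶠ z in nhds z₀, G z = (z - z₀) ^ m * g z := by
  obtain ⟨p, hp⟩ := hG.analyticAt z₀
  obtain ⟨r, hball⟩ := hp
  have hp' : HasFPowerSeriesAt G p z₀ := ⟨r, hball⟩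
  have key : ∀ k : ℕ, iteratedDeriv k G z₀ = (Nat.factorial k : ℂ) * p.coeff k := by
    intro k
    have h1 := hball.factorial_smul (1 : ℂ) k
    rw [iteratedDeriv_eq_iteratedFDeriv, ← h1, nsmul_eq_mul]
    rfl
  have hclt : ∀ k < m, p k = 0 := by
    intro k hk
    rw [← FormalMultilinearSeries.coeff_eq_zero]
    have h2 := key k
    rw [h0 k hk] at h2
    exact (mul_eq_zero.mp h2.symm).resolve_left
      (Nat.cast_ne_zero.mpr (Nat.factorial_ne_zero k))
  have hpm : p m ≠ 0 := by
    intro h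
    apply hne
    rw [key m, FormalMultilinearSeries.coeff_eq_zero.mpr h, mul_zero]
  have hpne : p ≠ 0 := fun h => hpm (by simp [h])
  have horder : p.order = m := by
    have h1 := p.apply_order_ne_zero hpne
    have h2 : ¬ p.order < m := fun hlt => h1 (hclt _ hlt)
    have h3 : p.order ≤ m := Nat.sInf_le hpm
    omega
  refine ⟨(Function.swap dslope z₀)^[m] G,
    ⟨_, horder ▸ hp'.has_fpower_series_iterate_dslope_fslope p.order⟩, ?_, ?_⟩
  · have := hp'.iterate_dslope_fslope_ne_zero hpne
    rwa [horder] at this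
  · have := hp'.eq_pow_order_mul_iterate_dslope
    rw [horder] at this
    exact Filter.Eventually.of_forall (fun z => by simpa [smul_eq_mul] using this z)

lemma norm_band (ψ : ℂ → ℂ) (z₀ : ℂ) (h : ContinuousAt ψ z₀) (hne : ψ z₀ ≠ 0) :
    ∀ᶠ z in nhds z₀, ‖ψ z₀‖ / 2 ≤ ‖ψ z‖ ∧ ‖ψ z‖ ≤ 3 / 2 * ‖ψ z₀‖ := by
  have hpos : 0 < ‖ψ z₀‖ / 2 := by
    have := norm_pos_iff.mpr hne; linarith
  have h1 : ∀ᶠ z in nhds z₀, ψ z ∈ Metric.ball (ψ z₀) (‖ψ z₀‖ / 2) :=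
    h (Metric.ball_mem_nhds _ hpos)
  filter_upwards [h1] with z hz
  rw [Metric.mem_ball, dist_eq_norm] at hz
  have h2 := abs_norm_sub_norm_le (ψ z) (ψ z₀)
  rw [abs_le] at h2
  constructor <;> linarith [h2.1, h2.2]

lemma deriv_band (F : ℂ → ℂ) (c : ℂ) (z₀ : ℂ) (m : ℕ) (g : ℂ → ℂ)
    (hg_an : AnalyticAt ℂ g z₀) (hg_ne : g z₀ ≠ 0) (hm : 1 ≤ m)
    (heq : ∀ᶠ z in nhds z₀, F z = (z - z₀) ^ m * g z + c) :
    ∃ c₁ C₁ : ℝ, 0 < c₁ ∧ c₁ ≤ C₁ ∧ ∀ᶠ z in nhds z₀,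
      c₁ * ‖z - z₀‖ ^ (m - 1) ≤ ‖deriv F z‖ ∧ ‖deriv F z‖ ≤ C₁ * ‖z - z₀‖ ^ (m - 1) := by
  obtain ⟨s, hsmem, hs⟩ := hg_an.eventually_analyticAt.exists_mem
  have hz₀s : z₀ ∈ s := mem_of_mem_nhds hsmem
  have hdg_an : AnalyticAt ℂ (deriv g) z₀ := (AnalyticOnNhd.deriv hs) z₀ hz₀s
  set ψ : ℂ → ℂ := fun z => (m : ℂ) * g z + (z - z₀) * deriv g z with hψdef
  have hψcont : ContinuousAt ψ z₀ :=
    (continuousAt_const.mul hg_an.continuousAt).add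
      ((continuousAt_id.sub continuousAt_const).mul hdg_an.continuousAt)
  have hψ0 : ψ z₀ = (m : ℂ) * g z₀ := by simp [hψdef]
  have hψne : ψ z₀ ≠ 0 := by
    rw [hψ0]
    exact mul_ne_zero (Nat.cast_ne_zero.mpr (by omega)) hg_ne
  have hderiv : ∀ᶠ z in nhds z₀, deriv F z = (z - z₀) ^ (m - 1) * ψ z := by
    filter_upwards [heq.eventually_nhds, hg_an.eventually_analyticAt] with z hz hgz
    have hF' : deriv F z = deriv (fun w => (w - z₀) ^ m * g w + c) z :=
      Filter.EventuallyEq.deriv_eq hz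
    have h1 : HasDerivAt (fun w : ℂ => (w - z₀) ^ m) ((m : ℂ) * (z - z₀) ^ (m - 1) * 1) z :=
      ((hasDerivAt_id z).sub_const z₀).pow m
    have h2 : HasDerivAt g (deriv g z) z := hgz.differentiableAt.hasDerivAt
    have h3 := (h1.mul h2).add_const c
    rw [hF', show deriv (fun w => (w - z₀) ^ m * g w + c) z = _ from h3.deriv]
    have hpow : (z - z₀) ^ m = (z - z₀) ^ (m - 1) * (z - z₀) := by
      rw [← pow_succ]; congr 1; omega
    rw [hpow, hψdef]; ring
  refine ⟨‖ψ z₀‖ / 2, 3 / 2 * ‖ψ z₀‖, by have := norm_pos_iff.mpr hψne; linarith, by nlinarith [norm_nonneg (ψ z₀)], ?_⟩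
  filter_upwards [hderiv, norm_band ψ z₀ hψcont hψne] with z h1 h2
  have hP : (0:ℝ) ≤ ‖z - z₀‖ ^ (m - 1) := by positivity
  rw [h1, norm_mul, norm_pow]
  constructor <;> nlinarith [h2.1, h2.2]

lemma lin_band (H : ℂ → ℂ) (t₀ : ℂ) (hH : DifferentiableAt ℂ H t₀) (h0 : H t₀ = 0)
    (hne : deriv H t₀ ≠ 0) :
    ∃ b B : ℝ, 0 < b ∧ b ≤ B ∧ ∀ᶠ t in nhds t₀,
      b * ‖t - t₀‖ ≤ ‖H t‖ ∧ ‖H t‖ ≤ B * ‖t - t₀‖ := by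
  set φ := dslope H t₀ with hφdef
  have hfac : ∀ t : ℂ, H t = (t - t₀) * φ t := by
    intro t
    have := sub_smul_dslope H t₀ t
    rw [h0, sub_zero, smul_eq_mul] at this
    exact this.symm
  have hφcont : ContinuousAt φ t₀ := continuousAt_dslope_same.mpr hH
  have hφne : φ t₀ ≠ 0 := by rw [hφdef, dslope_same]; exact hne
  refine ⟨‖φ t₀‖ / 2, 3 / 2 * ‖φ t₀‖, by have := norm_pos_iff.mpr hφne; linarith,
    by nlinarith [norm_nonneg (φ t₀)], ?_⟩
  filter_upwards [norm_band φ t₀ hφcont hφne] with t h2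
  have hP : (0:ℝ) ≤ ‖t - t₀‖ := norm_nonneg _
  rw [hfac t, norm_mul]
  constructor <;> nlinarith [h2.1, h2.2]

lemma aux_rpow (m : ℕ) (hm : 1 ≤ m) (x : ℝ) (hx : 0 ≤ x) :
    (x ^ m) ^ (((m : ℝ) - 1) / m) = x ^ (m - 1) := by
  have hm0 : (m : ℝ) ≠ 0 := Nat.cast_ne_zero.mpr (by omega)
  rw [← Real.rpow_natCast x m, ← Real.rpow_mul hx]
  have : (m : ℝ) * (((m : ℝ) - 1) / m) = ((m - 1 : ℕ) : ℝ) := by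
    rw [Nat.cast_sub hm]
    field_simp
    norm_num
  rw [this, Real.rpow_natCast]


/-- Under the hypotheses of the previous statement (`F` entire with an `m`-fold
zero structure of `F − 2cos(πt₀)` at `λ₀`, `sin(πt₀) ≠ 0`, `F(λ(t)) = 2cos(πt)`
with `λ(t) → λ₀`), one has `|F'(λ(t))| ∼ |t − t₀|^{(m−1)/m}` as `t → t₀`. -/
theorem stmt12 (F : ℂ → ℂ) (hF : Differentiable ℂ F) (lam₀ t₀ : ℂ) (m : ℕ) (hm : 1 ≤ m)
    (hval : F lam₀ = 2 * Complex.cos ((Real.pi : ℂ) * t₀))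
    (hzero : ∀ k : ℕ, 1 ≤ k → k ≤ m - 1 → iteratedDeriv k F lam₀ = 0)
    (hne : iteratedDeriv m F lam₀ ≠ 0)
    (hsin : Complex.sin ((Real.pi : ℂ) * t₀) ≠ 0)
    (lam : ℂ → ℂ) (U : Set ℂ) (hU : U ∈ nhds t₀)
    (hcont : ContinuousOn lam (U \ {t₀}))
    (hlim : Tendsto lam (nhdsWithin t₀ {t₀}ᶜ) (nhds lam₀))
    (heq : ∀ t ∈ U \ {t₀}, F (lam t) = 2 * Complex.cos ((Real.pi : ℂ) * t)) :
    ∃ c C : ℝ, 0 < c ∧ c ≤ C ∧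
      ∀ᶠ t in nhdsWithin t₀ {t₀}ᶜ,
        c * ‖t - t₀‖ ^ (((m : ℝ) - 1) / m) ≤ ‖deriv F (lam t)‖ ∧
        ‖deriv F (lam t)‖ ≤ C * ‖t - t₀‖ ^ (((m : ℝ) - 1) / m) := by
  set c2 : ℂ := 2 * Complex.cos ((Real.pi : ℂ) * t₀) with hc2
  -- derivatives of G := F - c2 agree with those of F for k ≥ 1
  have hGF : ∀ j : ℕ, iteratedDeriv (j + 1) (fun z => F z - c2) lam₀
      = iteratedDeriv (j + 1) F lam₀ := by
    intro j
    rw [iteratedDeriv_succ', iteratedDeriv_succ']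
    congr 1
    funext x
    exact deriv_sub_const c2
  have h0 : ∀ k < m, iteratedDeriv k (fun z => F z - c2) lam₀ = 0 := by
    intro k hk
    match k with
    | 0 => simp [iteratedDeriv_zero, hval]
    | (j + 1) =>
      rw [hGF j]
      exact hzero (j + 1) (by omega) (by omega)
  have hne' : iteratedDeriv m (fun z => F z - c2) lam₀ ≠ 0 := by
    obtain ⟨j, rfl⟩ : ∃ j, m = j + 1 := ⟨m - 1, by omega⟩
    rw [hGF j]; exact hne
  obtain ⟨g, hg_an, hg_ne, hg_eq⟩ :=
    factor_of_derivs (fun z => F z - c2) (hF.sub_const c2) lam₀ m h0 hne'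
  have heqF : ∀ᶠ z in nhds lam₀, F z = (z - lam₀) ^ m * g z + c2 :=
    hg_eq.mono fun z hz => by
      have : F z - c2 = (z - lam₀) ^ m * g z := hz
      linear_combination this
  obtain ⟨c₁, C₁, hc₁, hcC₁, hS⟩ := deriv_band F c2 lam₀ m g hg_an hg_ne hm heqF
  -- the function H t = 2 cos (π t) - c2
  have hHder : HasDerivAt (fun t : ℂ => 2 * Complex.cos ((Real.pi : ℂ) * t) - c2)
      (2 * (-Complex.sin ((Real.pi : ℂ) * t₀) * (Real.pi : ℂ))) t₀ := by
    have h1 : HasDerivAt (fun t : ℂ => (Real.pi : ℂ) * t) (Real.pi : ℂ) t₀ := by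
      simpa using (hasDerivAt_id t₀).const_mul (Real.pi : ℂ)
    exact (((Complex.hasDerivAt_cos ((Real.pi : ℂ) * t₀)).comp t₀ h1).const_mul 2).sub_const c2
  have hHne : deriv (fun t : ℂ => 2 * Complex.cos ((Real.pi : ℂ) * t) - c2) t₀ ≠ 0 := by
    rw [hHder.deriv]
    have hπ : (Real.pi : ℂ) ≠ 0 := Complex.ofReal_ne_zero.mpr Real.pi_ne_zero
    exact mul_ne_zero two_ne_zero (mul_ne_zero (neg_ne_zero.mpr hsin) hπ)
  obtain ⟨b, B, hb, hbB, hHb⟩ := lin_band (fun t : ℂ => 2 * Complex.cos ((Real.pi : ℂ) * t) - c2)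
    t₀ hHder.differentiableAt (by simp [hc2]) hHne
  -- band for ‖F z - c2‖ in terms of ‖z - lam₀‖ ^ m
  set a : ℝ := ‖g lam₀‖ / 2 with ha_def
  set A : ℝ := 3 / 2 * ‖g lam₀‖ with hA_def
  have ha : 0 < a := by have := norm_pos_iff.mpr hg_ne; rw [ha_def]; linarith
  have haA : a ≤ A := by rw [ha_def, hA_def]; nlinarith [norm_nonneg (g lam₀)]
  have hA : 0 < A := lt_of_lt_of_le ha haA
  have hT : ∀ᶠ z in nhds lam₀,
      a * ‖z - lam₀‖ ^ m ≤ ‖F z - c2‖ ∧ ‖F z - c2‖ ≤ A * ‖z - lam₀‖ ^ m := by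
    filter_upwards [hg_eq, norm_band g lam₀ hg_an.continuousAt hg_ne] with z hz h2
    have hzz : F z - c2 = (z - lam₀) ^ m * g z := hz
    have hP : (0:ℝ) ≤ ‖z - lam₀‖ ^ m := by positivity
    rw [hzz, norm_mul, norm_pow]
    constructor <;> nlinarith [h2.1, h2.2]
  -- final constants
  set e : ℝ := ((m : ℝ) - 1) / m with he_def
  have he0 : 0 ≤ e := by
    rw [he_def]
    apply div_nonneg _ (by positivity)
    have : (1:ℝ) ≤ (m:ℝ) := by exact_mod_cast hm
    linarith
  refine ⟨c₁ * (b / A) ^ e, C₁ * (B / a) ^ e, by positivity, ?_, ?_⟩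
  · have h1 : b / A ≤ B / a := by
      rw [div_le_div_iff₀ hA ha]
      nlinarith
    exact mul_le_mul hcC₁ (Real.rpow_le_rpow (by positivity) h1 he0)
      (Real.rpow_nonneg (by positivity) e) (le_trans hc₁.le hcC₁)
  have hUev : ∀ᶠ t in nhds t₀, t ∈ U := hU
  filter_upwards [hUev.filter_mono nhdsWithin_le_nhds, eventually_mem_nhdsWithin,
    hlim.eventually hS, hlim.eventually hT, hHb.filter_mono nhdsWithin_le_nhds]
    with t htU htne hSt hTt hHt
  have htne' : t ≠ t₀ := htne
  have hFeq : F (lam t) - c2 = 2 * Complex.cos ((Real.pi : ℂ) * t) - c2 := by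
    rw [heq t ⟨htU, htne'⟩]
  rw [hFeq] at hTt
  set r : ℝ := ‖lam t - lam₀‖ with hr_def
  set s : ℝ := ‖t - t₀‖ with hs_def
  have hr0 : 0 ≤ r := norm_nonneg _
  have hs0 : 0 ≤ s := norm_nonneg _
  have h1 : r ^ m ≤ (B / a) * s := by
    rw [div_mul_eq_mul_div, le_div_iff₀ ha]
    calc r ^ m * a = a * r ^ m := mul_comm _ _
    _ ≤ ‖2 * Complex.cos ((Real.pi : ℂ) * t) - c2‖ := hTt.1
    _ ≤ B * s := hHt.2
  have h2 : (b / A) * s ≤ r ^ m := by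
    rw [div_mul_eq_mul_div, div_le_iff₀ hA]
    calc b * s ≤ ‖2 * Complex.cos ((Real.pi : ℂ) * t) - c2‖ := hHt.1
    _ ≤ A * r ^ m := hTt.2
    _ = r ^ m * A := mul_comm _ _
  constructor
  · calc c₁ * (b / A) ^ e * s ^ e = c₁ * ((b / A) * s) ^ e := by
          rw [Real.mul_rpow (div_nonneg hb.le hA.le) hs0]; ring
    _ ≤ c₁ * (r ^ m) ^ e :=
          mul_le_mul_of_nonneg_left (Real.rpow_le_rpow (mul_nonneg (div_nonneg hb.le hA.le) hs0) h2 he0) hc₁.le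
    _ = c₁ * r ^ (m - 1) := by rw [he_def, aux_rpow m hm r hr0]
    _ ≤ ‖deriv F (lam t)‖ := hSt.1
  · calc ‖deriv F (lam t)‖ ≤ C₁ * r ^ (m - 1) := hSt.2
    _ = C₁ * (r ^ m) ^ e := by rw [he_def, aux_rpow m hm r hr0]
    _ ≤ C₁ * ((B / a) * s) ^ e :=
          mul_le_mul_of_nonneg_left (Real.rpow_le_rpow (pow_nonneg hr0 m) h1 he0)
            (le_trans hc₁.le hcC₁)
    _ = C₁ * (B / a) ^ e * s ^ e := by
          rw [Real.mul_rpow (div_nonneg (hb.le.trans hbB) ha.le) hs0]; ring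
end

section
/- Let c(x,λ), s(x,λ) be the fundamental solutions of the Dirac system J y' + Q y = λ y with c(0,λ) = (1,0)ᵀ, s(0,λ) = (0,1)ᵀ, and F(λ) = c₁(π,λ) + s₂(π,λ). Then F'(λ) = ∫₀^π [ s₁(π,λ)(c₁(x,λ)² + c₂(x,λ)²) + (s₂(π,λ) − c₁(π,λ))(c₁(x,λ)s₁(x,λ) + c₂(x,λ)s₂(x,λ)) − c₂(π,λ)(s₁(x,λ)² + s₂(x,λ)²) ] dx. -/
open intervalIntegral

lemma dirac_green (p q : ℝ → ℂ) (lam mu : ℂ) (u₁ u₂ v₁ v₂ : ℝ → ℂ)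
    (hu₂ : ∀ x, HasDerivAt u₂ ((lam - p x) * u₁ x - q x * u₂ x) x)
    (hu₁ : ∀ x, HasDerivAt u₁ (q x * u₁ x - p x * u₂ x - lam * u₂ x) x)
    (hv₂ : ∀ x, HasDerivAt v₂ ((mu - p x) * v₁ x - q x * v₂ x) x)
    (hv₁ : ∀ x, HasDerivAt v₁ (q x * v₁ x - p x * v₂ x - mu * v₂ x) x) :
    (mu - lam) * ∫ x in (0:ℝ)..Real.pi, (u₁ x * v₁ x + u₂ x * v₂ x) =
      (u₁ Real.pi * v₂ Real.pi - u₂ Real.pi * v₁ Real.pi) -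
        (u₁ 0 * v₂ 0 - u₂ 0 * v₁ 0) := by
  have cu₁ : Continuous u₁ := continuous_iff_continuousAt.2 fun x => (hu₁ x).continuousAt
  have cu₂ : Continuous u₂ := continuous_iff_continuousAt.2 fun x => (hu₂ x).continuousAt
  have cv₁ : Continuous v₁ := continuous_iff_continuousAt.2 fun x => (hv₁ x).continuousAt
  have cv₂ : Continuous v₂ := continuous_iff_continuousAt.2 fun x => (hv₂ x).continuousAt
  rw [← intervalIntegral.integral_const_mul]
  refine intervalIntegral.integral_eq_sub_of_hasDerivAt
    (f := fun x => u₁ x * v₂ x - u₂ x * v₁ x) (fun t _ => ?_) ?_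
  · have h := ((hu₁ t).mul (hv₂ t)).sub ((hu₂ t).mul (hv₁ t))
    exact h.congr_deriv (by ring)
  · exact (continuous_const.mul ((cu₁.mul cv₁).add (cu₂.mul cv₂))).intervalIntegrable 0 Real.pi

lemma dirac_gronwall (p q : ℝ → ℂ) (lam : ℂ) (w₁ w₂ r₁ r₂ : ℝ → ℂ) (K ε δ : ℝ)
    (hw₁ : ∀ x, HasDerivAt w₁ (q x * w₁ x - p x * w₂ x - lam * w₂ x + r₁ x) x)
    (hw₂ : ∀ x, HasDerivAt w₂ ((lam - p x) * w₁ x - q x * w₂ x + r₂ x) x)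
    (hK : ∀ x ∈ Set.Icc (0:ℝ) Real.pi, ‖p x‖ + ‖q x‖ + ‖lam‖ ≤ K)
    (hr : ∀ x ∈ Set.Icc (0:ℝ) Real.pi, ‖r₁ x‖ ≤ ε ∧ ‖r₂ x‖ ≤ ε)
    (h0 : ‖w₁ 0‖ ≤ δ ∧ ‖w₂ 0‖ ≤ δ) :
    ∀ x ∈ Set.Icc (0:ℝ) Real.pi,
      ‖w₁ x‖ ≤ gronwallBound δ K ε x ∧ ‖w₂ x‖ ≤ gronwallBound δ K ε x := by
  set f : ℝ → ℂ × ℂ := fun x => (w₁ x, w₂ x) with hf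
  have hf' : ∀ x, HasDerivAt f
      ((q x * w₁ x - p x * w₂ x - lam * w₂ x + r₁ x,
        (lam - p x) * w₁ x - q x * w₂ x + r₂ x)) x := fun x => (hw₁ x).prodMk (hw₂ x)
  have key : ∀ x ∈ Set.Icc (0:ℝ) Real.pi, ‖f x‖ ≤ gronwallBound δ K ε (x - 0) := by
    apply norm_le_gronwallBound_of_norm_deriv_right_le
      (f' := fun x => (q x * w₁ x - p x * w₂ x - lam * w₂ x + r₁ x,
        (lam - p x) * w₁ x - q x * w₂ x + r₂ x))
    · exact (Continuous.continuousOn (continuous_iff_continuousAt.2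
        fun x => (hf' x).continuousAt))
    · exact fun x _ => (hf' x).hasDerivWithinAt
    · rw [Prod.norm_def]
      exact max_le h0.1 h0.2
    · intro x hx
      have hx' : x ∈ Set.Icc (0:ℝ) Real.pi := Set.Ico_subset_Icc_self hx
      have hw1 : ‖w₁ x‖ ≤ ‖f x‖ := norm_fst_le (f x)
      have hw2 : ‖w₂ x‖ ≤ ‖f x‖ := norm_snd_le (f x)
      have hKx := hK x hx'
      have e1 : ‖q x * w₁ x - p x * w₂ x - lam * w₂ x + r₁ x‖ ≤ K * ‖f x‖ + ε := by
        calc ‖q x * w₁ x - p x * w₂ x - lam * w₂ x + r₁ x‖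
            ≤ ‖q x * w₁ x - p x * w₂ x - lam * w₂ x‖ + ‖r₁ x‖ := norm_add_le _ _
          _ ≤ (‖q x * w₁ x - p x * w₂ x‖ + ‖lam * w₂ x‖) + ε :=
              add_le_add (norm_sub_le _ _) (hr x hx').1
          _ ≤ ((‖q x * w₁ x‖ + ‖p x * w₂ x‖) + ‖lam * w₂ x‖) + ε := by
              gcongr; exact norm_sub_le _ _
          _ = (‖q x‖ * ‖w₁ x‖ + ‖p x‖ * ‖w₂ x‖ + ‖lam‖ * ‖w₂ x‖) + ε := by
              simp [norm_mul]
          _ ≤ (‖q x‖ * ‖f x‖ + ‖p x‖ * ‖f x‖ + ‖lam‖ * ‖f x‖) + ε := by gcongr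
          _ = (‖p x‖ + ‖q x‖ + ‖lam‖) * ‖f x‖ + ε := by ring
          _ ≤ K * ‖f x‖ + ε := by gcongr
      have e2 : ‖(lam - p x) * w₁ x - q x * w₂ x + r₂ x‖ ≤ K * ‖f x‖ + ε := by
        calc ‖(lam - p x) * w₁ x - q x * w₂ x + r₂ x‖
            ≤ ‖(lam - p x) * w₁ x - q x * w₂ x‖ + ‖r₂ x‖ := norm_add_le _ _
          _ ≤ (‖(lam - p x) * w₁ x‖ + ‖q x * w₂ x‖) + ε :=
              add_le_add (norm_sub_le _ _) (hr x hx').2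
          _ = ‖lam - p x‖ * ‖w₁ x‖ + ‖q x‖ * ‖w₂ x‖ + ε := by simp [norm_mul]
          _ ≤ (‖lam‖ + ‖p x‖) * ‖f x‖ + ‖q x‖ * ‖f x‖ + ε := by
              gcongr; exact norm_sub_le _ _
          _ = (‖p x‖ + ‖q x‖ + ‖lam‖) * ‖f x‖ + ε := by ring
          _ ≤ K * ‖f x‖ + ε := by gcongr
      rw [Prod.norm_def]
      exact max_le e1 e2
  intro x hx
  have h := key x hx
  rw [sub_zero] at h
  exact ⟨le_trans (norm_fst_le (f x)) h, le_trans (norm_snd_le (f x)) h⟩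

lemma dirac_apriori (p q : ℝ → ℂ) (lam : ℂ) (w₁ w₂ : ℝ → ℂ) (K : ℝ) (hK0 : 0 ≤ K)
    (hw₁ : ∀ x, HasDerivAt w₁ (q x * w₁ x - p x * w₂ x - lam * w₂ x) x)
    (hw₂ : ∀ x, HasDerivAt w₂ ((lam - p x) * w₁ x - q x * w₂ x) x)
    (hK : ∀ x ∈ Set.Icc (0:ℝ) Real.pi, ‖p x‖ + ‖q x‖ + ‖lam‖ ≤ K)
    (h0 : ‖w₁ 0‖ ≤ 1 ∧ ‖w₂ 0‖ ≤ 1) :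
    ∀ x ∈ Set.Icc (0:ℝ) Real.pi,
      ‖w₁ x‖ ≤ Real.exp (K * Real.pi) ∧ ‖w₂ x‖ ≤ Real.exp (K * Real.pi) := by
  have h := dirac_gronwall p q lam w₁ w₂ (fun _ => 0) (fun _ => 0) K 0 1
    (fun x => by simpa using hw₁ x) (fun x => by simpa using hw₂ x) hK
    (fun x _ => by simp) h0
  intro x hx
  have hb : gronwallBound 1 K 0 x ≤ Real.exp (K * Real.pi) := by
    rw [gronwallBound_ε0, one_mul]
    exact Real.exp_le_exp.2 (mul_le_mul_of_nonneg_left hx.2 hK0)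
  exact ⟨le_trans (h x hx).1 hb, le_trans (h x hx).2 hb⟩

lemma dirac_diff (p q : ℝ → ℂ) (lam : ℂ) (w₁ w₂ r₁ r₂ : ℝ → ℂ) (K ε : ℝ)
    (hK0 : 0 < K) (hε : 0 ≤ ε)
    (hw₁ : ∀ x, HasDerivAt w₁ (q x * w₁ x - p x * w₂ x - lam * w₂ x + r₁ x) x)
    (hw₂ : ∀ x, HasDerivAt w₂ ((lam - p x) * w₁ x - q x * w₂ x + r₂ x) x)
    (hK : ∀ x ∈ Set.Icc (0:ℝ) Real.pi, ‖p x‖ + ‖q x‖ + ‖lam‖ ≤ K)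
    (hr : ∀ x ∈ Set.Icc (0:ℝ) Real.pi, ‖r₁ x‖ ≤ ε ∧ ‖r₂ x‖ ≤ ε)
    (h0 : w₁ 0 = 0 ∧ w₂ 0 = 0) :
    ∀ x ∈ Set.Icc (0:ℝ) Real.pi,
      ‖w₁ x‖ ≤ ε * ((Real.exp (K * Real.pi) - 1) / K) ∧
      ‖w₂ x‖ ≤ ε * ((Real.exp (K * Real.pi) - 1) / K) := by
  have h := dirac_gronwall p q lam w₁ w₂ r₁ r₂ K ε 0 hw₁ hw₂ hK hr
    (by simp [h0.1, h0.2])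
  intro x hx
  have hb : gronwallBound 0 K ε x ≤ ε * ((Real.exp (K * Real.pi) - 1) / K) := by
    rw [gronwallBound_of_K_ne_0 (ne_of_gt hK0)]
    have h1 : Real.exp (K * x) ≤ Real.exp (K * Real.pi) :=
      Real.exp_le_exp.2 (mul_le_mul_of_nonneg_left hx.2 hK0.le)
    have h2 : (0:ℝ) ≤ ε / K := div_nonneg hε hK0.le
    calc 0 * Real.exp (K * x) + ε / K * (Real.exp (K * x) - 1)
        = ε / K * (Real.exp (K * x) - 1) := by ring
      _ ≤ ε / K * (Real.exp (K * Real.pi) - 1) := by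
          apply mul_le_mul_of_nonneg_left _ h2; linarith
      _ = ε * ((Real.exp (K * Real.pi) - 1) / K) := by ring
  exact ⟨le_trans (h x hx).1 hb, le_trans (h x hx).2 hb⟩

lemma term_bound (B a b d e : ℂ) (M D : ℝ) (hM : 0 ≤ M)
    (ha : ‖a‖ ≤ M) (hb : ‖b‖ ≤ M) (hd : ‖d‖ ≤ D) (he : ‖e‖ ≤ D) :
    ‖B * (a * d + b * e)‖ ≤ ‖B‖ * (2 * (M * D)) := by
  rw [norm_mul]
  refine mul_le_mul_of_nonneg_left ?_ (norm_nonneg B)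
  calc ‖a * d + b * e‖ ≤ ‖a * d‖ + ‖b * e‖ := norm_add_le _ _
    _ = ‖a‖ * ‖d‖ + ‖b‖ * ‖e‖ := by simp [norm_mul]
    _ ≤ M * D + M * D := add_le_add
        (mul_le_mul ha hd (norm_nonneg _) hM) (mul_le_mul hb he (norm_nonneg _) hM)
    _ = 2 * (M * D) := by ring

/-- Derivative of the Hill discriminant of the Dirac system: if `c(x,λ), s(x,λ)`
are the fundamental solutions of `J y' + Q y = λ y` with `c(0,λ) = (1,0)ᵀ`,
`s(0,λ) = (0,1)ᵀ`, depending differentiably on `λ`, and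
`F(λ) = c₁(π,λ) + s₂(π,λ)`, then
`F'(λ) = ∫₀^π [ s₁(π,λ)(c₁² + c₂²) + (s₂(π,λ) − c₁(π,λ))(c₁s₁ + c₂s₂)
              − c₂(π,λ)(s₁² + s₂²) ] dx`. -/
theorem stmt19 (p q : ℝ → ℂ) (hp : Continuous p) (hq : Continuous q)
    (c₁ c₂ s₁ s₂ : ℂ → ℝ → ℂ)
    (hc : ∀ lam : ℂ, ∀ x : ℝ,
      HasDerivAt (c₂ lam) ((lam - p x) * c₁ lam x - q x * c₂ lam x) x ∧
      HasDerivAt (c₁ lam) (q x * c₁ lam x - p x * c₂ lam x - lam * c₂ lam x) x)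
    (hs : ∀ lam : ℂ, ∀ x : ℝ,
      HasDerivAt (s₂ lam) ((lam - p x) * s₁ lam x - q x * s₂ lam x) x ∧
      HasDerivAt (s₁ lam) (q x * s₁ lam x - p x * s₂ lam x - lam * s₂ lam x) x)
    (hc0 : ∀ lam : ℂ, c₁ lam 0 = 1 ∧ c₂ lam 0 = 0)
    (hs0 : ∀ lam : ℂ, s₁ lam 0 = 0 ∧ s₂ lam 0 = 1)
    (hdiff : ∀ x : ℝ, Differentiable ℂ (fun lam => c₁ lam x) ∧
      Differentiable ℂ (fun lam => c₂ lam x) ∧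
      Differentiable ℂ (fun lam => s₁ lam x) ∧
      Differentiable ℂ (fun lam => s₂ lam x)) :
    ∀ lam : ℂ,
      HasDerivAt (fun μ : ℂ => c₁ μ Real.pi + s₂ μ Real.pi)
        (∫ x in (0:ℝ)..Real.pi,
          s₁ lam Real.pi * ((c₁ lam x) ^ 2 + (c₂ lam x) ^ 2) +
            (s₂ lam Real.pi - c₁ lam Real.pi) *
              (c₁ lam x * s₁ lam x + c₂ lam x * s₂ lam x) -
            c₂ lam Real.pi * ((s₁ lam x) ^ 2 + (s₂ lam x) ^ 2)) lam := by
  intro lam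
  -- continuity of solutions in x
  have contc1 : ∀ μ : ℂ, Continuous (c₁ μ) := fun μ =>
    continuous_iff_continuousAt.2 fun x => (hc μ x).2.continuousAt
  have contc2 : ∀ μ : ℂ, Continuous (c₂ μ) := fun μ =>
    continuous_iff_continuousAt.2 fun x => (hc μ x).1.continuousAt
  have conts1 : ∀ μ : ℂ, Continuous (s₁ μ) := fun μ =>
    continuous_iff_continuousAt.2 fun x => (hs μ x).2.continuousAt
  have conts2 : ∀ μ : ℂ, Continuous (s₂ μ) := fun μ =>
    continuous_iff_continuousAt.2 fun x => (hs μ x).1.continuousAt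
  -- Wronskian
  have hW : c₁ lam Real.pi * s₂ lam Real.pi - c₂ lam Real.pi * s₁ lam Real.pi = 1 := by
    have h := dirac_green p q lam lam (c₁ lam) (c₂ lam) (s₁ lam) (s₂ lam)
      (fun x => (hc lam x).1) (fun x => (hc lam x).2)
      (fun x => (hs lam x).1) (fun x => (hs lam x).2)
    rw [sub_self, zero_mul, (hc0 lam).1, (hc0 lam).2, (hs0 lam).1, (hs0 lam).2] at h
    linear_combination -h
  -- bound on p, q
  obtain ⟨Cpq, hCpq⟩ : ∃ C, ∀ x ∈ Set.Icc (0:ℝ) Real.pi, ‖p x‖ + ‖q x‖ ≤ C := by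
    obtain ⟨x₀, -, hx₀⟩ := isCompact_Icc.exists_isMaxOn
      (Set.nonempty_Icc.2 Real.pi_nonneg) ((hp.norm.add hq.norm).continuousOn)
    exact ⟨‖p x₀‖ + ‖q x₀‖, fun y hy => hx₀ hy⟩
  have hCpq0 : (0:ℝ) ≤ Cpq :=
    le_trans (by positivity) (hCpq 0 (Set.left_mem_Icc.2 Real.pi_nonneg))
  set K : ℝ := Cpq + ‖lam‖ + 1 with hKdef
  have hK0 : (0:ℝ) < K := by rw [hKdef]; have := norm_nonneg lam; linarith
  set E : ℝ := Real.exp (K * Real.pi) with hEdef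
  have hE1 : (1:ℝ) ≤ E := by
    rw [hEdef, show (1:ℝ) = Real.exp 0 from (Real.exp_zero).symm]
    exact Real.exp_le_exp.2 (by positivity)
  have hE0 : (0:ℝ) < E := lt_of_lt_of_le one_pos hE1
  -- K bounds the coefficients for μ near lam
  have hKb : ∀ μ : ℂ, ‖μ - lam‖ ≤ 1 →
      ∀ x ∈ Set.Icc (0:ℝ) Real.pi, ‖p x‖ + ‖q x‖ + ‖μ‖ ≤ K := by
    intro μ hμ x hx
    have h1 := hCpq x hx
    have h2 : ‖μ‖ - ‖lam‖ ≤ ‖μ - lam‖ := norm_sub_norm_le μ lam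
    rw [hKdef]; linarith
  -- apriori bounds
  have hbc : ∀ μ : ℂ, ‖μ - lam‖ ≤ 1 → ∀ x ∈ Set.Icc (0:ℝ) Real.pi,
      ‖c₁ μ x‖ ≤ E ∧ ‖c₂ μ x‖ ≤ E := fun μ hμ =>
    dirac_apriori p q μ (c₁ μ) (c₂ μ) K hK0.le
      (fun x => (hc μ x).2) (fun x => (hc μ x).1) (hKb μ hμ)
      ⟨by simp [(hc0 μ).1], by simp [(hc0 μ).2]⟩
  have hbs : ∀ μ : ℂ, ‖μ - lam‖ ≤ 1 → ∀ x ∈ Set.Icc (0:ℝ) Real.pi,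
      ‖s₁ μ x‖ ≤ E ∧ ‖s₂ μ x‖ ≤ E := fun μ hμ =>
    dirac_apriori p q μ (s₁ μ) (s₂ μ) K hK0.le
      (fun x => (hs μ x).2) (fun x => (hs μ x).1) (hKb μ hμ)
      ⟨by simp [(hs0 μ).1], by simp [(hs0 μ).2]⟩
  have hlam1 : ‖lam - lam‖ ≤ 1 := by simp
  -- difference bounds
  have hdc : ∀ μ : ℂ, ‖μ - lam‖ ≤ 1 → ∀ x ∈ Set.Icc (0:ℝ) Real.pi,
      ‖c₁ μ x - c₁ lam x‖ ≤ (‖μ - lam‖ * E) * ((E - 1) / K) ∧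
      ‖c₂ μ x - c₂ lam x‖ ≤ (‖μ - lam‖ * E) * ((E - 1) / K) := by
    intro μ hμ
    refine dirac_diff p q lam (fun x => c₁ μ x - c₁ lam x) (fun x => c₂ μ x - c₂ lam x)
      (fun x => -((μ - lam) * c₂ μ x)) (fun x => (μ - lam) * c₁ μ x) K (‖μ - lam‖ * E)
      hK0 (by positivity) (fun x => ?_) (fun x => ?_) (hKb lam hlam1) (fun x hx => ?_)
      ⟨by simp [(hc0 μ).1, (hc0 lam).1], by simp [(hc0 μ).2, (hc0 lam).2]⟩
    · have h := (hc μ x).2.sub (hc lam x).2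
      exact h.congr_deriv (by ring)
    · have h := (hc μ x).1.sub (hc lam x).1
      exact h.congr_deriv (by ring)
    · constructor
      · rw [norm_neg, norm_mul]
        exact mul_le_mul_of_nonneg_left (hbc μ hμ x hx).2 (norm_nonneg _)
      · rw [norm_mul]
        exact mul_le_mul_of_nonneg_left (hbc μ hμ x hx).1 (norm_nonneg _)
  have hds : ∀ μ : ℂ, ‖μ - lam‖ ≤ 1 → ∀ x ∈ Set.Icc (0:ℝ) Real.pi,
      ‖s₁ μ x - s₁ lam x‖ ≤ (‖μ - lam‖ * E) * ((E - 1) / K) ∧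
      ‖s₂ μ x - s₂ lam x‖ ≤ (‖μ - lam‖ * E) * ((E - 1) / K) := by
    intro μ hμ
    refine dirac_diff p q lam (fun x => s₁ μ x - s₁ lam x) (fun x => s₂ μ x - s₂ lam x)
      (fun x => -((μ - lam) * s₂ μ x)) (fun x => (μ - lam) * s₁ μ x) K (‖μ - lam‖ * E)
      hK0 (by positivity) (fun x => ?_) (fun x => ?_) (hKb lam hlam1) (fun x hx => ?_)
      ⟨by simp [(hs0 μ).1, (hs0 lam).1], by simp [(hs0 μ).2, (hs0 lam).2]⟩
    · have h := (hs μ x).2.sub (hs lam x).2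
      exact h.congr_deriv (by ring)
    · have h := (hs μ x).1.sub (hs lam x).1
      exact h.congr_deriv (by ring)
    · constructor
      · rw [norm_neg, norm_mul]
        exact mul_le_mul_of_nonneg_left (hbs μ hμ x hx).2 (norm_nonneg _)
      · rw [norm_mul]
        exact mul_le_mul_of_nonneg_left (hbs μ hμ x hx).1 (norm_nonneg _)
  -- the auxiliary function H
  set H : ℂ → ℂ := fun μ => ∫ x in (0:ℝ)..Real.pi,
    (s₁ lam Real.pi * (c₁ lam x * c₁ μ x + c₂ lam x * c₂ μ x)
      + s₂ lam Real.pi * (c₁ lam x * s₁ μ x + c₂ lam x * s₂ μ x)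
      - c₁ lam Real.pi * (s₁ lam x * c₁ μ x + s₂ lam x * c₂ μ x)
      - c₂ lam Real.pi * (s₁ lam x * s₁ μ x + s₂ lam x * s₂ μ x)) with hHdef
  have i1 : ∀ μ : ℂ, IntervalIntegrable
      (fun x => s₁ lam Real.pi * (c₁ lam x * c₁ μ x + c₂ lam x * c₂ μ x)) MeasureTheory.volume 0 Real.pi :=
    fun μ => (continuous_const.mul (((contc1 lam).mul (contc1 μ)).add
      ((contc2 lam).mul (contc2 μ)))).intervalIntegrable _ _
  have i2 : ∀ μ : ℂ, IntervalIntegrable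
      (fun x => s₂ lam Real.pi * (c₁ lam x * s₁ μ x + c₂ lam x * s₂ μ x)) MeasureTheory.volume 0 Real.pi :=
    fun μ => (continuous_const.mul (((contc1 lam).mul (conts1 μ)).add
      ((contc2 lam).mul (conts2 μ)))).intervalIntegrable _ _
  have i3 : ∀ μ : ℂ, IntervalIntegrable
      (fun x => c₁ lam Real.pi * (s₁ lam x * c₁ μ x + s₂ lam x * c₂ μ x)) MeasureTheory.volume 0 Real.pi :=
    fun μ => (continuous_const.mul (((conts1 lam).mul (contc1 μ)).add
      ((conts2 lam).mul (contc2 μ)))).intervalIntegrable _ _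
  have i4 : ∀ μ : ℂ, IntervalIntegrable
      (fun x => c₂ lam Real.pi * (s₁ lam x * s₁ μ x + s₂ lam x * s₂ μ x)) MeasureTheory.volume 0 Real.pi :=
    fun μ => (continuous_const.mul (((conts1 lam).mul (conts1 μ)).add
      ((conts2 lam).mul (conts2 μ)))).intervalIntegrable _ _
  have hsplit : ∀ μ : ℂ, H μ =
      s₁ lam Real.pi * (∫ x in (0:ℝ)..Real.pi, (c₁ lam x * c₁ μ x + c₂ lam x * c₂ μ x))
      + s₂ lam Real.pi * (∫ x in (0:ℝ)..Real.pi, (c₁ lam x * s₁ μ x + c₂ lam x * s₂ μ x))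
      - c₁ lam Real.pi * (∫ x in (0:ℝ)..Real.pi, (s₁ lam x * c₁ μ x + s₂ lam x * c₂ μ x))
      - c₂ lam Real.pi * (∫ x in (0:ℝ)..Real.pi, (s₁ lam x * s₁ μ x + s₂ lam x * s₂ μ x)) := by
    intro μ
    simp only [hHdef]
    rw [intervalIntegral.integral_sub (((i1 μ).add (i2 μ)).sub (i3 μ)) (i4 μ),
      intervalIntegral.integral_sub ((i1 μ).add (i2 μ)) (i3 μ),
      intervalIntegral.integral_add (i1 μ) (i2 μ),
      intervalIntegral.integral_const_mul, intervalIntegral.integral_const_mul,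
      intervalIntegral.integral_const_mul, intervalIntegral.integral_const_mul]
  -- key identity
  have hkey : ∀ μ : ℂ, (μ - lam) * H μ =
      (c₁ μ Real.pi + s₂ μ Real.pi) - (c₁ lam Real.pi + s₂ lam Real.pi) := by
    intro μ
    have GA := dirac_green p q lam μ (c₁ lam) (c₂ lam) (c₁ μ) (c₂ μ)
      (fun x => (hc lam x).1) (fun x => (hc lam x).2)
      (fun x => (hc μ x).1) (fun x => (hc μ x).2)
    have GB := dirac_green p q lam μ (c₁ lam) (c₂ lam) (s₁ μ) (s₂ μ)
      (fun x => (hc lam x).1) (fun x => (hc lam x).2)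
      (fun x => (hs μ x).1) (fun x => (hs μ x).2)
    have GC := dirac_green p q lam μ (s₁ lam) (s₂ lam) (c₁ μ) (c₂ μ)
      (fun x => (hs lam x).1) (fun x => (hs lam x).2)
      (fun x => (hc μ x).1) (fun x => (hc μ x).2)
    have GD := dirac_green p q lam μ (s₁ lam) (s₂ lam) (s₁ μ) (s₂ μ)
      (fun x => (hs lam x).1) (fun x => (hs lam x).2)
      (fun x => (hs μ x).1) (fun x => (hs μ x).2)
    rw [(hc0 lam).1, (hc0 lam).2, (hc0 μ).1, (hc0 μ).2] at GA
    rw [(hc0 lam).1, (hc0 lam).2, (hs0 μ).1, (hs0 μ).2] at GB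
    rw [(hs0 lam).1, (hs0 lam).2, (hc0 μ).1, (hc0 μ).2] at GC
    rw [(hs0 lam).1, (hs0 lam).2, (hs0 μ).1, (hs0 μ).2] at GD
    rw [hsplit μ]
    linear_combination s₁ lam Real.pi * GA + s₂ lam Real.pi * GB
      - c₁ lam Real.pi * GC - c₂ lam Real.pi * GD
      + (c₁ μ Real.pi + s₂ μ Real.pi) * hW
  -- Lipschitz-type bound on H near lam
  obtain ⟨CH, hCH0, hHb⟩ : ∃ CH : ℝ, 0 ≤ CH ∧ ∀ μ : ℂ, ‖μ - lam‖ ≤ 1 →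
      ‖H μ - H lam‖ ≤ CH * ‖μ - lam‖ := by
    refine ⟨(‖s₁ lam Real.pi‖ + ‖s₂ lam Real.pi‖ + ‖c₁ lam Real.pi‖ + ‖c₂ lam Real.pi‖)
      * (2 * (E * (E * ((E - 1) / K)))) * Real.pi, ?_, ?_⟩
    · have h1 : (0:ℝ) ≤ (E - 1) / K := div_nonneg (by linarith) hK0.le
      have h2 : (0:ℝ) ≤ ‖s₁ lam Real.pi‖ + ‖s₂ lam Real.pi‖ + ‖c₁ lam Real.pi‖
          + ‖c₂ lam Real.pi‖ := by positivity
      have := Real.pi_nonneg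
      positivity
    · intro μ hμ
      have hsub : H μ - H lam = ∫ x in (0:ℝ)..Real.pi,
          ((s₁ lam Real.pi * (c₁ lam x * c₁ μ x + c₂ lam x * c₂ μ x)
            + s₂ lam Real.pi * (c₁ lam x * s₁ μ x + c₂ lam x * s₂ μ x)
            - c₁ lam Real.pi * (s₁ lam x * c₁ μ x + s₂ lam x * c₂ μ x)
            - c₂ lam Real.pi * (s₁ lam x * s₁ μ x + s₂ lam x * s₂ μ x))
          - (s₁ lam Real.pi * (c₁ lam x * c₁ lam x + c₂ lam x * c₂ lam x)
            + s₂ lam Real.pi * (c₁ lam x * s₁ lam x + c₂ lam x * s₂ lam x)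
            - c₁ lam Real.pi * (s₁ lam x * c₁ lam x + s₂ lam x * c₂ lam x)
            - c₂ lam Real.pi * (s₁ lam x * s₁ lam x + s₂ lam x * s₂ lam x))) := by
        simp only [hHdef]
        exact (intervalIntegral.integral_sub
          ((((i1 μ).add (i2 μ)).sub (i3 μ)).sub (i4 μ))
          ((((i1 lam).add (i2 lam)).sub (i3 lam)).sub (i4 lam))).symm
      rw [hsub]
      set D : ℝ := (‖μ - lam‖ * E) * ((E - 1) / K) with hDdef
      have hbound : ∀ x ∈ Set.uIoc (0:ℝ) Real.pi, ‖((s₁ lam Real.pi * (c₁ lam x * c₁ μ x + c₂ lam x * c₂ μ x)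
            + s₂ lam Real.pi * (c₁ lam x * s₁ μ x + c₂ lam x * s₂ μ x)
            - c₁ lam Real.pi * (s₁ lam x * c₁ μ x + s₂ lam x * c₂ μ x)
            - c₂ lam Real.pi * (s₁ lam x * s₁ μ x + s₂ lam x * s₂ μ x))
          - (s₁ lam Real.pi * (c₁ lam x * c₁ lam x + c₂ lam x * c₂ lam x)
            + s₂ lam Real.pi * (c₁ lam x * s₁ lam x + c₂ lam x * s₂ lam x)
            - c₁ lam Real.pi * (s₁ lam x * c₁ lam x + s₂ lam x * c₂ lam x)
            - c₂ lam Real.pi * (s₁ lam x * s₁ lam x + s₂ lam x * s₂ lam x)))‖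
          ≤ (‖s₁ lam Real.pi‖ + ‖s₂ lam Real.pi‖ + ‖c₁ lam Real.pi‖ + ‖c₂ lam Real.pi‖)
            * (2 * (E * D)) := by
        intro x hxu
        have hx : x ∈ Set.Icc (0:ℝ) Real.pi := by
          rw [Set.uIoc_of_le Real.pi_nonneg] at hxu
          exact Set.Ioc_subset_Icc_self hxu
        have heq : ((s₁ lam Real.pi * (c₁ lam x * c₁ μ x + c₂ lam x * c₂ μ x)
            + s₂ lam Real.pi * (c₁ lam x * s₁ μ x + c₂ lam x * s₂ μ x)
            - c₁ lam Real.pi * (s₁ lam x * c₁ μ x + s₂ lam x * c₂ μ x)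
            - c₂ lam Real.pi * (s₁ lam x * s₁ μ x + s₂ lam x * s₂ μ x))
          - (s₁ lam Real.pi * (c₁ lam x * c₁ lam x + c₂ lam x * c₂ lam x)
            + s₂ lam Real.pi * (c₁ lam x * s₁ lam x + c₂ lam x * s₂ lam x)
            - c₁ lam Real.pi * (s₁ lam x * c₁ lam x + s₂ lam x * c₂ lam x)
            - c₂ lam Real.pi * (s₁ lam x * s₁ lam x + s₂ lam x * s₂ lam x)))
          = s₁ lam Real.pi * (c₁ lam x * (c₁ μ x - c₁ lam x) + c₂ lam x * (c₂ μ x - c₂ lam x))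
            + s₂ lam Real.pi * (c₁ lam x * (s₁ μ x - s₁ lam x) + c₂ lam x * (s₂ μ x - s₂ lam x))
            - c₁ lam Real.pi * (s₁ lam x * (c₁ μ x - c₁ lam x) + s₂ lam x * (c₂ μ x - c₂ lam x))
            - c₂ lam Real.pi * (s₁ lam x * (s₁ μ x - s₁ lam x) + s₂ lam x * (s₂ μ x - s₂ lam x)) := by
          ring
        rw [heq]
        have t1 := term_bound (s₁ lam Real.pi) (c₁ lam x) (c₂ lam x)
          (c₁ μ x - c₁ lam x) (c₂ μ x - c₂ lam x) E D hE0.le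
          (hbc lam hlam1 x hx).1 (hbc lam hlam1 x hx).2 (hdc μ hμ x hx).1 (hdc μ hμ x hx).2
        have t2 := term_bound (s₂ lam Real.pi) (c₁ lam x) (c₂ lam x)
          (s₁ μ x - s₁ lam x) (s₂ μ x - s₂ lam x) E D hE0.le
          (hbc lam hlam1 x hx).1 (hbc lam hlam1 x hx).2 (hds μ hμ x hx).1 (hds μ hμ x hx).2
        have t3 := term_bound (c₁ lam Real.pi) (s₁ lam x) (s₂ lam x)
          (c₁ μ x - c₁ lam x) (c₂ μ x - c₂ lam x) E D hE0.le
          (hbs lam hlam1 x hx).1 (hbs lam hlam1 x hx).2 (hdc μ hμ x hx).1 (hdc μ hμ x hx).2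
        have t4 := term_bound (c₂ lam Real.pi) (s₁ lam x) (s₂ lam x)
          (s₁ μ x - s₁ lam x) (s₂ μ x - s₂ lam x) E D hE0.le
          (hbs lam hlam1 x hx).1 (hbs lam hlam1 x hx).2 (hds μ hμ x hx).1 (hds μ hμ x hx).2
        calc ‖_ + _ - _ - _‖ ≤ ‖_ + _ - _‖ + ‖_‖ := norm_sub_le _ _
          _ ≤ (‖_ + _‖ + ‖_‖) + ‖_‖ := by gcongr; exact norm_sub_le _ _
          _ ≤ ((‖_‖ + ‖_‖) + ‖_‖) + ‖_‖ := by gcongr; exact norm_add_le _ _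
          _ ≤ ((‖s₁ lam Real.pi‖ * (2 * (E * D)) + ‖s₂ lam Real.pi‖ * (2 * (E * D)))
              + ‖c₁ lam Real.pi‖ * (2 * (E * D))) + ‖c₂ lam Real.pi‖ * (2 * (E * D)) := by
            exact add_le_add (add_le_add (add_le_add t1 t2) t3) t4
          _ = (‖s₁ lam Real.pi‖ + ‖s₂ lam Real.pi‖ + ‖c₁ lam Real.pi‖ + ‖c₂ lam Real.pi‖)
              * (2 * (E * D)) := by ring
      have := intervalIntegral.norm_integral_le_of_norm_le_const hbound
      rw [sub_zero, abs_of_nonneg Real.pi_nonneg] at this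
      refine le_trans this (le_of_eq ?_)
      rw [hDdef]
      ring
  -- conclusion
  have hder : HasDerivAt (fun μ : ℂ => c₁ μ Real.pi + s₂ μ Real.pi) (H lam) lam := by
    rw [hasDerivAt_iff_isLittleO, Asymptotics.isLittleO_iff]
    intro ε hε
    rw [Metric.eventually_nhds_iff]
    refine ⟨min 1 (ε / (CH + 1)), lt_min one_pos (by positivity), fun μ hμd => ?_⟩
    rw [dist_eq_norm] at hμd
    have hμ1 : ‖μ - lam‖ ≤ 1 := le_trans hμd.le (min_le_left _ _)
    have hμ2 : ‖μ - lam‖ ≤ ε / (CH + 1) := le_trans hμd.le (min_le_right _ _)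
    have heq : c₁ μ Real.pi + s₂ μ Real.pi - (c₁ lam Real.pi + s₂ lam Real.pi)
        - (μ - lam) • H lam = (μ - lam) * (H μ - H lam) := by
      rw [smul_eq_mul]; linear_combination -hkey μ
    rw [heq, norm_mul]
    have h2 : ‖H μ - H lam‖ ≤ ε := by
      calc ‖H μ - H lam‖ ≤ CH * ‖μ - lam‖ := hHb μ hμ1
        _ ≤ CH * (ε / (CH + 1)) := by gcongr
        _ = (CH / (CH + 1)) * ε := by ring
        _ ≤ 1 * ε := by
            apply mul_le_mul_of_nonneg_right _ hε.le
            exact (div_le_one (by linarith)).2 (by linarith)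
        _ = ε := one_mul ε
    calc ‖μ - lam‖ * ‖H μ - H lam‖ ≤ ‖μ - lam‖ * ε :=
        mul_le_mul_of_nonneg_left h2 (norm_nonneg _)
      _ = ε * ‖μ - lam‖ := mul_comm _ _
  have hfin : (∫ x in (0:ℝ)..Real.pi,
      s₁ lam Real.pi * ((c₁ lam x) ^ 2 + (c₂ lam x) ^ 2) +
        (s₂ lam Real.pi - c₁ lam Real.pi) *
          (c₁ lam x * s₁ lam x + c₂ lam x * s₂ lam x) -
        c₂ lam Real.pi * ((s₁ lam x) ^ 2 + (s₂ lam x) ^ 2)) = H lam := by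
    simp only [hHdef]
    exact intervalIntegral.integral_congr (fun x _ => by ring)
  rw [hfin]
  exact hder
end
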